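/- If the polynomial hierarchy PH collapses to P^NP, then for every positive integer k there is a language L ∈ P^NP with L ∉ i.o.SIZE[n^k], i.e., L cannot be computed by circuits of size n^k even on infinitely many input lengths. -/

import Mathlib

open FirstOrder FirstOrder.Language

namespace CLB

/-! ### Binary length of a natural number (viewing numbers as binary strings). -/
def len (x : ℕ) : ℕ := Nat.size x

/-! ### Boolean circuits.
A circuit is a straight-line program: a list of gates, each gate a natural number
encoding (via pairing) its type (constant / input / not / and / or) and the indices
of its argument wires (earlier gates).  The size of a circuit is its number of gates. -/

def gateEval (x : ℕ → Bool) (prev : List Bool) (g : ℕ) : Bool :=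
  let t := g.unpair.1 % 5
  let a := g.unpair.2
  if t = 0 then a % 2 == 1
  else if t = 1 then x (a % (prev.length + 1))
  else if t = 2 then !(prev.getD a false)
  else if t = 3 then (prev.getD a.unpair.1 false) && (prev.getD a.unpair.2 false)
  else (prev.getD a.unpair.1 false) || (prev.getD a.unpair.2 false)

def circEvalList (C : List ℕ) (x : ℕ → Bool) : List Bool :=
  C.foldl (fun prev g => prev ++ [gateEval x prev g]) []

/-- The output of a circuit (the value of its last gate). -/
def circEval (C : List ℕ) (x : ℕ → Bool) : Bool := (circEvalList C x).getLastD false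

/-- Parsing a self-delimiting binary representation of a natural number. -/
def parseNum : List Bool → ℕ → ℕ × List Bool
  | [], acc => (acc, [])
  | [_], acc => (acc, [])
  | b :: c :: rest, acc => if b then parseNum rest (2 * acc + (cond c 1 0)) else (acc, rest)

def decodeLN : ℕ → List Bool → List ℕ
  | 0, _ => []
  | _ + 1, [] => []
  | f + 1, l => (parseNum l 0).1 :: decodeLN f (parseNum l 0).2

/-- Decoding a natural number (binary string) as a circuit. -/
def cDecode (x : ℕ) : List ℕ := decodeLN x.bits.length x.bits

/-- The number of gates of the circuit encoded by `x`. -/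
def csize (x : ℕ) : ℕ := (cDecode x).length

/-- Evaluation of an encoded circuit on the bits of an input string: `C(x)`. -/
def cEval (c x : ℕ) : ℕ := cond (circEval (cDecode c) x.testBit) 1 0

/-- `L` has a circuit with at most `s` gates deciding its length-`n` slice. -/
def HasCircAt (L : Set ℕ) (n s : ℕ) : Prop :=
  ∃ C : List ℕ, C.length ≤ s ∧ ∀ x : ℕ, len x = n → (circEval C x.testBit = true ↔ x ∈ L)

/-- `SIZE[s]`: circuits of size `s(n)` on every sufficiently large input length. -/
def SIZEae (s : ℕ → ℕ) : Set (Set ℕ) := {L | ∃ n₀, ∀ n ≥ n₀, HasCircAt L n (s n)}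

/-- `i.o.SIZE[s]`: circuits of size `s(n)` on infinitely many input lengths. -/
def ioSIZE (s : ℕ → ℕ) : Set (Set ℕ) := {L | ∀ n₀, ∃ n ≥ n₀, HasCircAt L n (s n)}

/-- `SIZE[poly]`. -/
def SIZEpoly : Set (Set ℕ) := {L | ∃ c, L ∈ SIZEae (fun n => n ^ c + c)}

/-! ### Polynomial-time functions.
Following Cobham's machine-independent characterization of the polynomial-time
functions (the characterization on which Cook's theory `PV` is based), `PTF` is the
smallest class of functions `ℕ → ℕ` (binary strings, paired via `Nat.pair`) containing
a stock of basic polynomial-time functions and closed under composition, pairing and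
limited recursion on notation. -/

/-- Limited recursion on notation (the recursive call is on the string with its last
bit removed, and the result is truncated by the bounding function `b`). -/
def limRonF (g h b : ℕ → ℕ) (x : ℕ) : ℕ → ℕ
  | 0 => g x
  | y + 1 =>
      min (h (Nat.pair x (Nat.pair (y + 1) (limRonF g h b x ((y + 1) / 2)))))
        (b (Nat.pair x (y + 1)))
  termination_by y => y
  decreasing_by exact Nat.div_lt_self (Nat.succ_pos y) one_lt_two

/-- The class of polynomial-time computable functions (Cobham-style algebra). -/
inductive PTF : (ℕ → ℕ) → Prop
  | id' : PTF (fun z => z)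
  | const (c : ℕ) : PTF (fun _ => c)
  | up1 : PTF (fun z => z.unpair.1)
  | up2 : PTF (fun z => z.unpair.2)
  | lenB : PTF (fun z => len z)
  | add : PTF (fun z => z.unpair.1 + z.unpair.2)
  | sub : PTF (fun z => z.unpair.1 - z.unpair.2)
  | mul : PTF (fun z => z.unpair.1 * z.unpair.2)
  | div : PTF (fun z => z.unpair.1 / z.unpair.2)
  | mod : PTF (fun z => z.unpair.1 % z.unpair.2)
  | smash : PTF (fun z => 2 ^ (len z.unpair.1 * len z.unpair.2))
  | unaryPow (c : ℕ) : PTF (fun z => 2 ^ (len z ^ c))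
  | powc (c : ℕ) : PTF (fun z => z ^ c)
  | ite0 : PTF (fun z => if z.unpair.1 = 0 then z.unpair.2.unpair.1 else z.unpair.2.unpair.2)
  | csizeB : PTF (fun z => csize z)
  | cEvalB : PTF (fun z => cEval z.unpair.1 z.unpair.2)
  | evalnB : PTF (fun z =>
      (Nat.Partrec.Code.evaln (len z.unpair.1)
        (Denumerable.ofNat Nat.Partrec.Code z.unpair.2.unpair.1) z.unpair.2.unpair.2).getD 0)
  | comp {f g} : PTF f → PTF g → PTF (fun z => f (g z))
  | pairF {f g} : PTF f → PTF g → PTF (fun z => Nat.pair (f z) (g z))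
  | limRon {g h b} : PTF g → PTF h → PTF b →
      PTF (fun z => limRonF g h b z.unpair.1 z.unpair.2)

theorem PTF.comp2 {F : ℕ → ℕ → ℕ} (hF : PTF (fun z => F z.unpair.1 z.unpair.2))
    {g h : ℕ → ℕ} (hg : PTF g) (hh : PTF h) : PTF (fun z => F (g z) (h z)) := by
  have := hF.comp (hg.pairF hh)
  simpa using this

/-! ### Complexity classes (over the standard model). -/

/-- `P`: polynomial-time decidable languages. -/
def Pclass : Set (Set ℕ) := {L | ∃ f, PTF f ∧ ∀ x, x ∈ L ↔ f x = 1}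

/-- `NP`: languages with polynomial-time verifiable, polynomially short witnesses. -/
def NPclass : Set (Set ℕ) :=
  {L | ∃ (c : ℕ) (V : ℕ → ℕ), PTF V ∧
    ∀ x, x ∈ L ↔ ∃ y, len y ≤ len x ^ c + c ∧ V (Nat.pair x y) = 1}

/-- Polynomial-time many-one reducibility. -/
def PolyReducible (A B : Set ℕ) : Prop := ∃ f, PTF f ∧ ∀ x, x ∈ A ↔ f x ∈ B

/-- `NP`-completeness (w.r.t. polynomial-time many-one reductions). -/
def NPComplete (O : Set ℕ) : Prop := O ∈ NPclass ∧ ∀ L ∈ NPclass, PolyReducible L O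

/-- Encoding a list of oracle answers as a number. -/
def encodeBools (l : List Bool) : ℕ := l.foldl (fun n b => 2 * n + (cond b 1 0)) 1

open Classical in
/-- The list of answers of oracle `O` to the first `i` adaptively generated
queries, where the next query is computed by `q` from the input and the
previous answers. -/
noncomputable def answers (O : Set ℕ) (q : ℕ → ℕ) (x : ℕ) : ℕ → List Bool
  | 0 => []
  | i + 1 =>
      answers O q x i ++
        [if q (Nat.pair x (encodeBools (answers O q x i))) ∈ O then true else false]

/-- `P^{O[ℓ]}`: languages decided in deterministic polynomial time with at most
`ℓ(n)` adaptive queries to the oracle `O` (queries generated by the polynomial-time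
function `q`, final decision by the polynomial-time function `d`). -/
def PNPQ (O : Set ℕ) (ℓ : ℕ → ℕ) : Set (Set ℕ) :=
  {L | ∃ q d, PTF q ∧ PTF d ∧
    ∀ x, x ∈ L ↔ d (Nat.pair x (encodeBools (answers O q x (ℓ (len x))))) = 1}

/-- `P^NP`: polynomial time with polynomially many adaptive queries to an
`NP`-complete oracle. -/
def PNPclass : Set (Set ℕ) :=
  {L | ∃ O, NPComplete O ∧ ∃ c, L ∈ PNPQ O (fun n => n ^ c + c)}

/-- `P^{NP[n]}`: at most `n` adaptive queries to an `NP`-complete oracle. -/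
def PNPnClass : Set (Set ℕ) := {L | ∃ O, NPComplete O ∧ L ∈ PNPQ O (fun n => n)}

/-- `P^{NP[c·log n]}`: at most `c·(log n + 1)` adaptive queries to an `NP`-complete oracle. -/
def PNPlogClass (c : ℕ) : Set (Set ℕ) :=
  {L | ∃ O, NPComplete O ∧ L ∈ PNPQ O (fun n => c * (Nat.log 2 n + 1))}

/-- The levels `Σ^p_k` of the polynomial hierarchy. -/
def SigmaP : ℕ → Set (Set ℕ)
  | 0 => Pclass
  | k + 1 =>
      {L | ∃ (c : ℕ) (L' : Set ℕ), L' ∈ SigmaP k ∧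
        ∀ x, x ∈ L ↔ ∃ y, len y ≤ len x ^ c + c ∧ Nat.pair x y ∉ L'}

/-- The polynomial hierarchy `PH`. -/
def PHclass : Set (Set ℕ) := {L | ∃ k, L ∈ SigmaP k}

/-- Output of a randomized oracle machine: decision function `d` applied to input `x`,
random string `r` and the answers to `m` adaptive oracle queries. -/
noncomputable def zppOut (O : Set ℕ) (q d : ℕ → ℕ) (m : ℕ) (x r : ℕ) : ℕ :=
  d (Nat.pair (Nat.pair x r) (encodeBools (answers O q (Nat.pair x r) m)))

/-- `ZPP^{NP[O(log n)]}`: zero-error probabilistic polynomial time with `O(log n)`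
adaptive queries to an `NP`-complete oracle.  The machine outputs `1` (accept),
`0` (reject) or anything else (abort `?`); it is never wrong and aborts with
probability at most `1/2` over the uniformly random string `r`. -/
noncomputable def ZPPNPlogClass : Set (Set ℕ) :=
  {L | ∃ O, NPComplete O ∧ ∃ (c : ℕ) (q d : ℕ → ℕ), PTF q ∧ PTF d ∧
    ∀ x : ℕ,
      (∀ r < 2 ^ (len x ^ c + c),
        (zppOut O q d (c * (Nat.log 2 (len x) + 1)) x r = 1 → x ∈ L) ∧
        (zppOut O q d (c * (Nat.log 2 (len x) + 1)) x r = 0 → x ∉ L)) ∧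
      2 * {r | r < 2 ^ (len x ^ c + c) ∧
            zppOut O q d (c * (Nat.log 2 (len x) + 1)) x r ≠ 1 ∧
            zppOut O q d (c * (Nat.log 2 (len x) + 1)) x r ≠ 0}.ncard
        ≤ 2 ^ (len x ^ c + c)}

/-! ### Kannan's hard language. -/

/-- `T` (a truth table for input length `n`) is hard for circuits of size `n^k`. -/
def TTHard (n k : ℕ) (T : ℕ) : Prop :=
  T < 2 ^ 2 ^ n ∧
    ¬ ∃ C : List ℕ, C.length ≤ n ^ k ∧ ∀ x : ℕ, len x = n → circEval C x.testBit = T.testBit x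

/-- The lexicographically first truth table on length-`n` inputs that is hard for
circuits of size `n^k` (or `0` if none exists). -/
noncomputable def leastHardTT (n k : ℕ) : ℕ := sInf {T | TTHard n k T}

/-- The language whose length-`n` slice is the lexicographically first truth table
of a function on length-`n` inputs not computable by circuits of size `n^k`. -/
noncomputable def kannanLang (k : ℕ) : Set ℕ :=
  {x | (leastHardTT (len x) k).testBit x = true}

end CLB

namespace CLB

/-! ### The language `L(PV)`.
`L(PV)` has a function symbol for each polynomial-time algorithm (of each arity,
multi-ary functions being handled via the pairing function), together with the
order relation `≤`.  Equality is built into first-order logic. -/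

/-- Decoding a number as a tuple of arguments. -/
def argAt : ℕ → ℕ → ℕ
  | z, 0 => z.unpair.1
  | z, i + 1 => argAt z.unpair.2 i

def decodeVec (n : ℕ) (z : ℕ) : Fin n → ℕ := fun i => argAt z i.val

/-- `f : (Fin n → ℕ) → ℕ` is a polynomial-time `n`-ary function. -/
def PolyVec (n : ℕ) (f : (Fin n → ℕ) → ℕ) : Prop := PTF (fun z => f (decodeVec n z))

inductive LPVRel : ℕ → Type | le : LPVRel 2

/-- The first-order language of `PV`: a function symbol for every polynomial-time
algorithm, and the relation symbol `≤`. -/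
def LPV : FirstOrder.Language :=
  ⟨fun n => {f : (Fin n → ℕ) → ℕ // PolyVec n f}, LPVRel⟩

/-- The standard model `ℕ`: every function symbol is interpreted by the
polynomial-time function it names. -/
instance : LPV.Structure ℕ where
  funMap f v := f.1 v
  RelMap r v := match r with | LPVRel.le => v 0 ≤ v 1

abbrev BF (n : ℕ) := LPV.BoundedFormula Empty n
abbrev Tm (n : ℕ) := LPV.Term (Empty ⊕ Fin n)

/-! ### Construction of some particular `PV` function symbols. -/

def mkF0 (c : ℕ) : LPV.Functions 0 := ⟨fun _ => c, PTF.const c⟩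

def mkF1 (f : ℕ → ℕ) (h : PTF (fun z => f z.unpair.1)) : LPV.Functions 1 :=
  ⟨fun v => f (v 0), h⟩

def mkF2 (f : ℕ → ℕ → ℕ) (h : PTF (fun z => f z.unpair.1 z.unpair.2.unpair.1)) :
    LPV.Functions 2 :=
  ⟨fun v => f (v 0) (v 1), h⟩

def mkF3 (f : ℕ → ℕ → ℕ → ℕ)
    (h : PTF (fun z => f z.unpair.1 z.unpair.2.unpair.1 z.unpair.2.unpair.2.unpair.1)) :
    LPV.Functions 3 :=
  ⟨fun v => f (v 0) (v 1) (v 2), h⟩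

/-- The constant `0`. -/
def zeroF : LPV.Functions 0 := mkF0 0
/-- The constant `1`. -/
def oneF : LPV.Functions 0 := mkF0 1
/-- The length function `x ↦ |x|`. -/
def lenSym : LPV.Functions 1 := mkF1 len (PTF.lenB.comp PTF.up1)
/-- Circuit size `C ↦ |C|` (number of gates). -/
def csizeSym : LPV.Functions 1 := mkF1 csize (PTF.csizeB.comp PTF.up1)
/-- Circuit evaluation `(C, x) ↦ C(x)`. -/
def cEvalSym : LPV.Functions 2 :=
  mkF2 cEval (PTF.comp2 PTF.cEvalB PTF.up1 (PTF.up1.comp PTF.up2))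
/-- Successor `x ↦ x + 1`. -/
def succSym : LPV.Functions 1 :=
  mkF1 (fun x => x + 1) (PTF.comp2 PTF.add PTF.up1 (PTF.const 1))
/-- `x ↦ x + c`. -/
def addConstSym (c : ℕ) : LPV.Functions 1 :=
  mkF1 (fun x => x + c) (PTF.comp2 PTF.add PTF.up1 (PTF.const c))
/-- `x ↦ 2x + 1`. -/
def dblS1Sym : LPV.Functions 1 :=
  mkF1 (fun x => 2 * x + 1)
    (PTF.comp2 PTF.add (PTF.comp2 PTF.mul (PTF.const 2) PTF.up1) (PTF.const 1))
/-- `x ↦ |x|^k`. -/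
def powLenSym (k : ℕ) : LPV.Functions 1 :=
  mkF1 (fun x => len x ^ k) ((PTF.powc k).comp (PTF.lenB.comp PTF.up1))
/-- The all-ones string of the length of `x`:  `x ↦ 2^{|x|} - 1` (i.e. `1^{(|x|)}`). -/
def onesSym : LPV.Functions 1 :=
  mkF1 (fun x => 2 ^ len x - 1)
    (by
      have h1 : PTF (fun z => 2 ^ (len z.unpair.1 ^ 1)) := (PTF.unaryPow 1).comp PTF.up1
      have h : PTF (fun z => 2 ^ len z.unpair.1) := by simpa using h1
      exact PTF.comp2 PTF.sub h (PTF.const 1))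
/-- The unary clock `x ↦ 1^{(|x|^c)} = 2^{|x|^c} - 1`. -/
def clockSym (c : ℕ) : LPV.Functions 1 :=
  mkF1 (fun x => 2 ^ (len x ^ c) - 1)
    (PTF.comp2 PTF.sub ((PTF.unaryPow c).comp PTF.up1) (PTF.const 1))
/-- Pairing. -/
def pairSym : LPV.Functions 2 := mkF2 Nat.pair (PTF.up1.pairF (PTF.up1.comp PTF.up2))
/-- First projection. -/
def fstSym : LPV.Functions 1 := mkF1 (fun x => x.unpair.1) (PTF.up1.comp PTF.up1)
/-- Second projection. -/
def sndSym : LPV.Functions 1 := mkF1 (fun x => x.unpair.2) (PTF.up2.comp PTF.up1)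
/-- The clocked universal machine: `(s, e, x) ↦` the output of the algorithm with
code `e` on input `x` run for `|s|` steps (and `0` if it has not halted). -/
def timedSym : LPV.Functions 3 :=
  mkF3 (fun s e x =>
      (Nat.Partrec.Code.evaln (len s) (Denumerable.ofNat Nat.Partrec.Code e) x).getD 0)
    (by
      have := PTF.evalnB.comp
        (PTF.up1.pairF ((PTF.up1.comp PTF.up2).pairF
          (PTF.up1.comp (PTF.up2.comp PTF.up2))))
      simpa using this)

/-! ### Formula-building helpers. -/

def xv {n : ℕ} (i : Fin n) : Tm n := Term.var (Sum.inr i)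
def ap1 {n : ℕ} (f : LPV.Functions 1) (t : Tm n) : Tm n := Term.func f ![t]
def ap2 {n : ℕ} (f : LPV.Functions 2) (t s : Tm n) : Tm n := Term.func f ![t, s]
def ap3 {n : ℕ} (f : LPV.Functions 3) (t s u : Tm n) : Tm n := Term.func f ![t, s, u]
def cst {n : ℕ} (f : LPV.Functions 0) : Tm n := Term.func f ![]
def oneT {n : ℕ} : Tm n := cst oneF
def zeroT {n : ℕ} : Tm n := cst zeroF
def leF {n : ℕ} (t s : Tm n) : BF n := BoundedFormula.rel LPVRel.le ![t, s]
def andF {n : ℕ} (φ ψ : BF n) : BF n := (φ.imp ψ.not).not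
def orF {n : ℕ} (φ ψ : BF n) : BF n := φ.not.imp ψ

/-- `θ(t)`: substitution of a term for the topmost (de Bruijn) variable, expressed
via a quantifier: `∀ y (y = t → θ(y))`. -/
def substTop {n : ℕ} (t : Tm n) (θ : BF (n + 1)) : BF n :=
  ((Term.bdEqual (xv (Fin.last n)) (t.liftAt 1 n)).imp θ).all

/-- The bounded existential quantifier `∃ y ≤ t, θ`. -/
def bdEx {n : ℕ} (t : Tm n) (θ : BF (n + 1)) : BF n :=
  (andF (leF (xv (Fin.last n)) (t.liftAt 1 n)) θ).ex

/-- The bounded universal quantifier `∀ y ≤ t, θ`. -/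
def bdAll {n : ℕ} (t : Tm n) (θ : BF (n + 1)) : BF n :=
  ((leF (xv (Fin.last n)) (t.liftAt 1 n)).imp θ).all

/-- `Σ^b_1(PV)`-formulas: a block of bounded existential quantifiers in front of a
quantifier-free formula. -/
inductive IsSigmaB1 : ∀ {n : ℕ}, BF n → Prop
  | of_qf {n : ℕ} {φ : BF n} : φ.IsQF → IsSigmaB1 φ
  | bdex {n : ℕ} (t : Tm n) {φ : BF (n + 1)} : IsSigmaB1 φ → IsSigmaB1 (bdEx t φ)

/-- `Π^b_1(PV)`-formulas. -/
inductive IsPiB1 : ∀ {n : ℕ}, BF n → Prop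
  | of_qf {n : ℕ} {φ : BF n} : φ.IsQF → IsPiB1 φ
  | bdall {n : ℕ} (t : Tm n) {φ : BF (n + 1)} : IsPiB1 φ → IsPiB1 (bdAll t φ)

/-- `Σ^b_2(PV)`-formulas: bounded existential quantifiers in front of a
quantifier-free formula or the negation of a `Σ^b_1`-formula (i.e. a `Π^b_1`-formula). -/
inductive IsSigmaB2 : ∀ {n : ℕ}, BF n → Prop
  | of_pi {n : ℕ} {φ : BF n} : IsPiB1 φ → IsSigmaB2 φ
  | bdex {n : ℕ} (t : Tm n) {φ : BF (n + 1)} : IsSigmaB2 φ → IsSigmaB2 (bdEx t φ)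

/-- Bounded formulas (all quantifiers bounded). -/
inductive IsBdd : ∀ {n : ℕ}, BF n → Prop
  | of_qf {n : ℕ} {φ : BF n} : φ.IsQF → IsBdd φ
  | imp {n : ℕ} {φ ψ : BF n} : IsBdd φ → IsBdd ψ → IsBdd (φ.imp ψ)
  | bdex {n : ℕ} (t : Tm n) {φ : BF (n + 1)} : IsBdd φ → IsBdd (bdEx t φ)
  | bdall {n : ℕ} (t : Tm n) {φ : BF (n + 1)} : IsBdd φ → IsBdd (bdAll t φ)

/-! ### Theories and provability. -/

/-- Provability: by Gödel's completeness theorem we identify provability from a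
first-order theory with semantic consequence. -/
def Proves (T : LPV.Theory) (S : LPV.Sentence) : Prop := T ⊨ᵇ S

/-- `True₀`: the theory of all true universal `L(PV)`-sentences.  (Cook's theory
`PV` is a universal theory sound for the standard model, so `PV ⊆ True₀`; following
the paper, all results are stated for theories containing the corresponding
true sentences, which only strengthens unprovability results.) -/
def True0 : LPV.Theory :=
  {S | (∃ (n : ℕ) (θ : BF n), θ.IsQF ∧ S = θ.alls) ∧ ℕ ⊨ S}

/-- The theory `PV`, taken extensionally (as in the paper, everything works for the
theory of all true universal `L(PV)`-sentences, which contains `PV`). -/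
def PVT : LPV.Theory := True0

/-- `True₁`: the theory of all true `∀Σ^b_1(PV)`-sentences. -/
def True1 : LPV.Theory :=
  {S | (∃ (n : ℕ) (θ : BF n), IsSigmaB1 θ ∧ S = θ.alls) ∧ ℕ ⊨ S}

/-- The length-induction axiom `LIND` for `θ` (with the induction variable the
topmost variable, all other variables universally quantified parameters):
`θ(0) ∧ ∀ x (θ(x) → θ(x+1)) → ∀ x θ(|x|)`. -/
def LINDax {n : ℕ} (θ : BF (n + 1)) : LPV.Sentence :=
  ((andF (substTop zeroT θ)
      ((θ.imp (((Term.bdEqual (xv (⟨n + 1, by omega⟩ : Fin (n + 2)))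
          (ap1 succSym (xv (⟨n, by omega⟩ : Fin (n + 2))))).imp (θ.liftAt 1 n)).all)).all)).imp
    ((((Term.bdEqual (xv (⟨n + 1, by omega⟩ : Fin (n + 2)))
        (ap1 lenSym (xv (⟨n, by omega⟩ : Fin (n + 2))))).imp (θ.liftAt 1 n)).all).all)).alls

/-- The induction axiom `IND` for `θ`:  `θ(0) ∧ ∀ x (θ(x) → θ(x+1)) → ∀ x θ(x)`. -/
def INDax {n : ℕ} (θ : BF (n + 1)) : LPV.Sentence :=
  ((andF (substTop zeroT θ)
      ((θ.imp (((Term.bdEqual (xv (⟨n + 1, by omega⟩ : Fin (n + 2)))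
          (ap1 succSym (xv (⟨n, by omega⟩ : Fin (n + 2))))).imp (θ.liftAt 1 n)).all)).all)).imp
    θ.all).alls

/-- The `Σ^b_1(PV)`-LIND scheme. -/
def LIND1 : LPV.Theory := {S | ∃ (n : ℕ) (θ : BF (n + 1)), IsSigmaB1 θ ∧ S = LINDax θ}

/-- The `Σ^b_1(PV)`-IND scheme. -/
def IND1 : LPV.Theory := {S | ∃ (n : ℕ) (θ : BF (n + 1)), IsSigmaB1 θ ∧ S = INDax θ}

/-- The `Σ^b_2(PV)`-LIND scheme. -/
def LIND2 : LPV.Theory := {S | ∃ (n : ℕ) (θ : BF (n + 1)), IsSigmaB2 θ ∧ S = LINDax θ}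

/-- The surjective weak pigeonhole principle for the function symbol `f` (with a
parameter): `∀ p ∀ a ∃ v ≤ 2a+1 ∀ u ≤ a, f(p,u) ≠ v`. -/
def sWPHPax (f : LPV.Functions 2) : LPV.Sentence :=
  let inner : BF 4 :=
    (leF (xv (3 : Fin 4)) (xv (1 : Fin 4))).imp
      ((Term.bdEqual (ap2 f (xv (0 : Fin 4)) (xv (3 : Fin 4))) (xv (2 : Fin 4))).not)
  let block : BF 3 :=
    andF (leF (xv (2 : Fin 3)) (ap1 dblS1Sym (xv (1 : Fin 3)))) inner.all
  block.ex.all.all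

/-- `sWPHP(PV)`: the surjective weak pigeonhole principle for all `PV` function symbols. -/
def sWPHPthy : LPV.Theory := {S | ∃ f : LPV.Functions 2, S = sWPHPax f}

/-! ### The sentences `UB^k_io(φ)` and friends. -/

/-- The language defined by the `L(PV)`-formula `φ(x)` in the standard model. -/
def LangOf (φ : BF 1) : Set ℕ := {x | φ.Realize (fun e => e.elim) ![x]}

/-- The atomic formula `f(x) = 1` defining the language of the `PV` function symbol `f`. -/
def atomicF (f : LPV.Functions 1) : BF 1 :=
  Term.bdEqual (ap1 f (xv (0 : Fin 1))) oneT

/-- The sentence `UB^k_io(φ)`: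
`∀ 1^{(n)} ∃ 1^{(m)} (m ≥ n) ∃ C_m (|C_m| ≤ m^k) ∀ x (|x| = m), φ(x) ≡ (C_m(x) = 1)`,
formalizing that the boolean functions defined by `φ` are computed on infinitely many
input lengths `m` by circuits with at most `m^k` gates.  (Variables: `y` with `n = |y|`,
`z` with `m = |z|`, the circuit `C`, and the input `x`.) -/
def UBio (k : ℕ) (φ : BF 1) : LPV.Sentence :=
  let inner : BF 4 :=
    (Term.bdEqual (ap1 lenSym (xv (3 : Fin 4))) (ap1 lenSym (xv (1 : Fin 4)))).imp
      ((φ.liftAt 3 0).iff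
        (Term.bdEqual (ap2 cEvalSym (xv (2 : Fin 4)) (xv (3 : Fin 4))) oneT))
  let block : BF 3 :=
    andF (leF (ap1 lenSym (xv (0 : Fin 3))) (ap1 lenSym (xv (1 : Fin 3))))
      (andF (leF (ap1 csizeSym (xv (2 : Fin 3))) (ap1 (powLenSym k) (xv (1 : Fin 3))))
        inner.all)
  block.ex.ex.all

/-- The sentence expressing that the language of `φ` has circuits of size `m^c + c`
on every sufficiently large input length `m` (`φ ∈ SIZE[poly]`, witnessed by the
exponent `c`). -/
def UBae (c : ℕ) (φ : BF 1) : LPV.Sentence :=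
  let inner : BF 4 :=
    (Term.bdEqual (ap1 lenSym (xv (3 : Fin 4))) (ap1 lenSym (xv (1 : Fin 4)))).imp
      ((φ.liftAt 3 0).iff
        (Term.bdEqual (ap2 cEvalSym (xv (2 : Fin 4)) (xv (3 : Fin 4))) oneT))
  let block : BF 3 :=
    andF
      (leF (ap1 csizeSym (xv (2 : Fin 3)))
        (ap1 (addConstSym c) (ap1 (powLenSym c) (xv (1 : Fin 3)))))
      inner.all
  let quant : BF 2 :=
    (leF (ap1 lenSym (xv (0 : Fin 2))) (ap1 lenSym (xv (1 : Fin 2)))).imp block.ex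
  quant.all.ex

/-- The sentence expressing that the language of `φ` has circuits of size `m^c + c`
on every input length `m`. -/
def UBevery (c : ℕ) (φ : BF 1) : LPV.Sentence :=
  let inner : BF 3 :=
    (Term.bdEqual (ap1 lenSym (xv (2 : Fin 3))) (ap1 lenSym (xv (0 : Fin 3)))).imp
      ((φ.liftAt 2 0).iff
        (Term.bdEqual (ap2 cEvalSym (xv (1 : Fin 3)) (xv (2 : Fin 3))) oneT))
  let block : BF 2 :=
    andF
      (leF (ap1 csizeSym (xv (1 : Fin 2)))
        (ap1 (addConstSym c) (ap1 (powLenSym c) (xv (0 : Fin 2)))))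
      inner.all
  block.ex.all

/-- `LB^k_tt(h) = ¬ UB^k_io(h)`: the language of `h` is hard for circuits of size
`m^k` on every input length `m ≥ n`, for some fixed `n`. -/
def LBtt (k : ℕ) (h : LPV.Functions 1) : LPV.Sentence := (UBio k (atomicF h)).not

end CLB

namespace CLB

/-! ### Further sentences used in the statements. -/

/-- The sentence expressing (provable) paddability of the encoding of the language
defined by `φ`, via the padding function symbol `pd`:
`∀ x ∀ z (|x| ≤ |z| → |pd(x,z)| = |z| ∧ (φ(pd(x,z)) ↔ φ(x)))`. -/
def padSent (φ : BF 1) (pd : LPV.Functions 2) : LPV.Sentence :=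
  let t : Tm 2 := ap2 pd (xv (0 : Fin 2)) (xv (1 : Fin 2))
  let phiAt : Tm 2 → BF 2 := fun s =>
    ((Term.bdEqual (xv (2 : Fin 3)) (s.liftAt 1 2)).imp (φ.liftAt 2 0)).all
  let inner : BF 2 :=
    (leF (ap1 lenSym (xv (0 : Fin 2))) (ap1 lenSym (xv (1 : Fin 2)))).imp
      (andF (Term.bdEqual (ap1 lenSym t) (ap1 lenSym (xv (1 : Fin 2))))
        ((phiAt t).iff (phiAt (xv (0 : Fin 2)))))
  inner.alls

/-- The sentence `PNP(ψ) = ∀ x ∀ y (ψ(x,y) → ψ(x, f(x)))`: the polynomial-time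
algorithm `f` finds satisfying assignments for all satisfiable formulas (where
`ψ(x,y)` expresses that `y` satisfies the formula encoded by `x`). -/
def PNPsent (ψ : BF 2) (f : LPV.Functions 1) : LPV.Sentence :=
  (ψ.imp ((substTop (ap1 f (xv (0 : Fin 1))) ψ).liftAt 1 1)).all.all

/-- The satisfaction relation of the `NP`-complete satisfiability problem:
`y` encodes a satisfying assignment of the (circuit form of the) propositional
formula encoded by `x`. -/
def SatRel (x y : ℕ) : Prop := circEval (cDecode x) y.testBit = true

/-- The sentence expressing that `g` is hard on all input lengths against every
algorithm (code `e`) running in time `|x|^{k'-1}` that uses an advice string `w`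
with `|w| ≤ n^{k'}`:
`∀ e ∀ w ∀ 1^{(n)} (|w| ≤ n^{k'} → ∃ x (|x| = n ∧ e(w,x) ≠ g(x)))`. -/
def hardSent (g : LPV.Functions 1) (k' : ℕ) : LPV.Sentence :=
  let run : Tm 4 :=
    ap3 timedSym (ap1 (clockSym (k' - 1)) (xv (3 : Fin 4))) (xv (0 : Fin 4))
      (ap2 pairSym (xv (1 : Fin 4)) (xv (3 : Fin 4)))
  let inner : BF 4 :=
    andF (Term.bdEqual (ap1 lenSym (xv (3 : Fin 4))) (ap1 lenSym (xv (2 : Fin 4))))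
      ((Term.bdEqual run (ap1 g (xv (3 : Fin 4)))).not)
  let body : BF 3 :=
    (leF (ap1 lenSym (xv (1 : Fin 3))) (ap1 (powLenSym k') (xv (2 : Fin 3)))).imp inner.ex
  body.all.all.all

/-- The term `f_i(1^{(n)}, x_1, …, x_{i-1})` in the context with variables
`y = x₀` (the string `1^{(n)}`) and `x_1, …, x_r`. -/
def kptTerm (r : ℕ) (f : (i : Fin r) → LPV.Functions (i + 1)) (i : Fin r) : Tm (r + 1) :=
  Term.func (f i) (fun j => xv ⟨j.val, by have := j.isLt; have := i.isLt; omega⟩)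

/-- The `i`-th disjunct of the KPT disjunction: writing
`(1^{(n_i)}, C^i) := f_i(1^{(n)}, x_1, …, x_{i-1})`, it says
`n_i ≥ n ∧ |C^i| ≤ n_i^k ∧ (|x_i| = n_i → C^i(x_i) = g(x_i))`. -/
def kptDisjunct (k : ℕ) (g : LPV.Functions 1) (r : ℕ)
    (f : (i : Fin r) → LPV.Functions (i + 1)) (i : Fin r) : BF (r + 1) :=
  let t := kptTerm r f i
  let ni : Tm (r + 1) := ap1 lenSym (ap1 fstSym t)
  let Ci : Tm (r + 1) := ap1 sndSym t
  let xi : Tm (r + 1) := xv ⟨i.val + 1, by have := i.isLt; omega⟩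
  andF (leF (ap1 lenSym (xv (⟨0, by omega⟩ : Fin (r + 1)))) ni)
    (andF (leF (ap1 csizeSym Ci) (ap1 (powLenSym k) (ap1 fstSym t)))
      ((Term.bdEqual (ap1 lenSym xi) ni).imp
        (Term.bdEqual (ap2 cEvalSym Ci xi) (ap1 g xi))))

/-- The universal closure of the KPT disjunction obtained by applying the KPT
witnessing theorem to `UB^k_io(g)`. -/
def kptSent (k : ℕ) (g : LPV.Functions 1) (r : ℕ)
    (f : (i : Fin r) → LPV.Functions (i + 1)) : LPV.Sentence :=
  ((List.finRange r).foldr (fun i acc => orF (kptDisjunct k g r f i) acc)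
    BoundedFormula.falsum).alls

/-- The universal closure of `n_i ≤ n^{a_i}`, i.e.
`|fst (f_i(1^{(n)}, x_1, …, x_{i-1}))| ≤ |1^{(n)}|^{a_i} + a_i` (provable polynomial
bound on the output length parameter of the KPT function `f_i`). -/
def lenBoundSent (r : ℕ) (f : (i : Fin r) → LPV.Functions (i + 1)) (i : Fin r)
    (a : ℕ) : LPV.Sentence :=
  (leF (ap1 lenSym (ap1 fstSym (kptTerm r f i)))
    (ap1 (addConstSym a) (ap1 (powLenSym a) (xv (⟨0, by omega⟩ : Fin (r + 1)))))).alls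

/-- `⌊n^{1/c}⌋`. -/
def nthRoot (c n : ℕ) : ℕ := Nat.findGreatest (fun m => m ^ c ≤ n) n

/-- The padded succinct direct-connection language `L¹_succ` of the circuits
produced by the first KPT function `f₁`: its members are tuples
`⟨Bin(n), 1^{(n^{1/10k})}, u, v, w, 1^t⟩` (encoded by iterated pairing, with the
padding parameter `t` arbitrary and ignored) such that gate `u` of the circuit
`C¹ := snd (f₁(1^{(n)}))` is described by the pair `(v, w)`. -/
def LtildeFun (k : ℕ) (f1 : LPV.Functions 1) (z : ℕ) : ℕ :=
  let n := z.unpair.1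
  let pad := z.unpair.2.unpair.1
  let u := z.unpair.2.unpair.2.unpair.1
  let v := z.unpair.2.unpair.2.unpair.2.unpair.1
  let w := z.unpair.2.unpair.2.unpair.2.unpair.2.unpair.1
  let C := cDecode (f1.1 ![2 ^ n - 1]).unpair.2
  if pad = 2 ^ nthRoot (10 * k) n - 1 ∧ C.getD u 0 = Nat.pair v w then 1 else 0

/-- The sentence stating that `u₁` enumerates (all-ones) input parameters
`1^{(n)} = u₁(1^{(ℓ)})` with `n ≥ ℓ` and `|u₁(1^{(ℓ)})| ≤ ℓ^{c₁} + c₁`, and that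
`e₁(1^{(ℓ)})` is a counter-example of length `n₁ = |fst(f₁(u₁(1^{(ℓ)})))|` on which the
circuit `snd(f₁(u₁(1^{(ℓ)})))` produced by `f₁` fails to compute `g`. -/
def ceSent (g f1 u1 e1 : LPV.Functions 1) (c1 : ℕ) : LPV.Sentence :=
  let y : Tm 1 := xv (0 : Fin 1)
  let uy : Tm 1 := ap1 u1 y
  let ey : Tm 1 := ap1 e1 y
  let n1 : Tm 1 := ap1 lenSym (ap1 fstSym (ap1 f1 uy))
  let C1 : Tm 1 := ap1 sndSym (ap1 f1 uy)
  (andF (Term.bdEqual uy (ap1 onesSym uy))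
    (andF (leF (ap1 lenSym y) (ap1 lenSym uy))
      (andF (leF (ap1 lenSym uy) (ap1 (addConstSym c1) (ap1 (powLenSym c1) y)))
        (andF (Term.bdEqual (ap1 lenSym ey) n1)
          ((Term.bdEqual (ap1 g ey) (ap2 cEvalSym C1 ey)).not))))).alls

end CLB

namespace CLB

/-! ### Auxiliary development for the final theorem. -/

section Aux

open Nat

/-- Size of a sum. -/
lemma size_add_le (a b : ℕ) : Nat.size (a + b) ≤ Nat.size a + Nat.size b + 1 := by
  rw [Nat.size_le]
  calc a + b < 2 ^ Nat.size a + 2 ^ Nat.size b := by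
        have := Nat.size_le.mp (le_refl (Nat.size a))
        have := Nat.size_le.mp (le_refl (Nat.size b))
        omega
    _ ≤ 2 ^ (Nat.size a + Nat.size b) + 2 ^ (Nat.size a + Nat.size b) := by
        gcongr <;> simp [Nat.pow_le_pow_right]
    _ ≤ 2 ^ (Nat.size a + Nat.size b + 1) := by rw [pow_succ]; omega

lemma size_mul_le (a b : ℕ) : Nat.size (a * b) ≤ Nat.size a + Nat.size b := by
  rw [Nat.size_le, pow_add]
  have ha := Nat.size_le.mp (le_refl (Nat.size a))
  have hb := Nat.size_le.mp (le_refl (Nat.size b))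
  calc a * b ≤ (2 ^ Nat.size a - 1) * (2 ^ Nat.size b - 1) := by
        apply Nat.mul_le_mul <;> omega
    _ < 2 ^ Nat.size a * 2 ^ Nat.size b := by
        have h1 : 0 < 2 ^ Nat.size a := Nat.pow_pos (by norm_num)
        have h2 : 0 < 2 ^ Nat.size b := Nat.pow_pos (by norm_num)
        calc (2 ^ Nat.size a - 1) * (2 ^ Nat.size b - 1)
            ≤ (2 ^ Nat.size a - 1) * 2 ^ Nat.size b := by apply Nat.mul_le_mul_left; omega
          _ < 2 ^ Nat.size a * 2 ^ Nat.size b := by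
              exact Nat.mul_lt_mul_of_lt_of_le (by omega) le_rfl h2

lemma self_lt_two_pow_size (n : ℕ) : n < 2 ^ Nat.size n := Nat.size_le.mp le_rfl

lemma two_pow_pred_size_le (n : ℕ) (hn : 1 ≤ n) : 2 ^ (Nat.size n - 1) ≤ n := by
  have h : 0 < Nat.size n := Nat.size_pos.mpr hn
  have := Nat.lt_size.mp (show Nat.size n - 1 < Nat.size n by omega)
  exact this

lemma size_pow_pred (j : ℕ) : Nat.size (2 ^ j - 1) = j := by
  rcases Nat.eq_zero_or_pos j with h | h
  · simp [h]
  · apply le_antisymm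
    · rw [Nat.size_le]; have : 0 < 2 ^ j := Nat.pow_pos (by norm_num); omega
    · have hle : 2 ^ (j-1) ≤ 2 ^ j - 1 := by
        have h1 : (2:ℕ) ^ (j - 1) * 2 = 2 ^ j := by
          rw [← pow_succ]; congr 1; omega
        have : 0 < 2 ^ (j-1) := Nat.pow_pos (by norm_num)
        omega
      have := Nat.lt_size.mpr hle
      omega

/-- There is a number of any prescribed length. -/
lemma exists_size_eq (j : ℕ) : Nat.size (2 ^ j - 1) = j := size_pow_pred j

lemma pair_le_sq (a b : ℕ) : Nat.pair a b ≤ (a + b + 1) ^ 2 := by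
  unfold Nat.pair
  split <;> nlinarith

lemma le_pair_left (a b : ℕ) : a ≤ Nat.pair a b := by
  unfold Nat.pair
  split <;> nlinarith

lemma le_pair_right (a b : ℕ) : b ≤ Nat.pair a b := by
  unfold Nat.pair
  split
  · nlinarith
  · nlinarith [Nat.le_of_not_lt (by assumption : ¬ a < b)]

lemma size_pair_le (a b : ℕ) : Nat.size (Nat.pair a b) ≤ 2 * (Nat.size a + Nat.size b) + 6 := by
  have h1 := pair_le_sq a b
  have h2 : Nat.size (Nat.pair a b) ≤ Nat.size ((a+b+1)^2) := Nat.size_le_size h1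
  have h3 : Nat.size ((a+b+1)^2) ≤ 2 * Nat.size (a+b+1) := by
    have : (a+b+1)^2 = (a+b+1) * (a+b+1) := by ring
    rw [this]
    have := size_mul_le (a+b+1) (a+b+1)
    omega
  have h4 : Nat.size (a+b+1) ≤ Nat.size a + Nat.size b + 3 := by
    have h5 := size_add_le (a+b) 1
    have h6 := size_add_le a b
    have : Nat.size 1 = 1 := by simp [Nat.size_one]
    omega
  omega

lemma size_le_self (n : ℕ) : Nat.size n ≤ n := by
  rw [Nat.size_le]; exact Nat.lt_two_pow_self (n := n)

end Aux

section Encoding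

/-- Self-delimiting encoding of one number from its MSB-first digit list. -/
def encNumBits : List Bool → List Bool
  | [] => [false, true]
  | b :: l => true :: b :: encNumBits l

lemma encNumBits_length (l : List Bool) : (encNumBits l).length = 2 * l.length + 2 := by
  induction l with
  | nil => simp [encNumBits]
  | cons b l ih => simp [encNumBits, ih]; omega

lemma encNumBits_ne_nil (l : List Bool) : encNumBits l ≠ [] := by
  cases l <;> simp [encNumBits]

lemma getLast?_cons_ne_nil {a : Bool} {l : List Bool} (h : l ≠ []) :
    (a :: l).getLast? = l.getLast? := by
  cases l with
  | nil => exact absurd rfl h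
  | cons b m => exact List.getLast?_cons_cons

lemma encNumBits_getLast_nil (l : List Bool) :
    (encNumBits l).getLast? = some true := by
  induction l with
  | nil => simp [encNumBits]
  | cons b l ih =>
      simp only [encNumBits]
      rw [getLast?_cons_ne_nil (by simp [encNumBits_ne_nil]),
          getLast?_cons_ne_nil (encNumBits_ne_nil l), ih]

lemma parseNum_encNumBits (l : List Bool) (rest : List Bool) (acc : ℕ) :
    parseNum (encNumBits l ++ rest) acc
      = (l.foldl (fun a b => 2 * a + cond b 1 0) acc, rest) := by
  induction l generalizing acc with
  | nil => simp [encNumBits, parseNum]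
  | cons b l ih => simp [encNumBits, parseNum, ih]

lemma foldl_bits_reverse (g : ℕ) :
    g.bits.reverse.foldl (fun a b => 2 * a + cond b 1 0) 0 = g := by
  rw [List.foldl_reverse]
  induction g using Nat.binaryRec' with
  | zero => simp
  | bit b g hb ih =>
      rw [Nat.bits_append_bit g b (by intro h; simpa [h] using hb)]
      simp only [List.foldr_cons, ih]
      cases b <;> simp [Nat.bit] <;> omega

/-- Encoding of one gate. -/
def encGate (g : ℕ) : List Bool := encNumBits g.bits.reverse

lemma parseNum_encGate (g : ℕ) (rest : List Bool) :
    parseNum (encGate g ++ rest) 0 = (g, rest) := by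
  rw [encGate, parseNum_encNumBits, foldl_bits_reverse]

lemma encGate_length (g : ℕ) : (encGate g).length = 2 * Nat.size g + 2 := by
  rw [encGate, encNumBits_length, List.length_reverse, Nat.size_eq_bits_len]

/-- Encoding of a circuit as a bit list. -/
def encCBits : List ℕ → List Bool
  | [] => []
  | g :: C => encGate g ++ encCBits C

lemma decodeLN_encCBits (C : List ℕ) (f : ℕ) (hf : C.length ≤ f) :
    decodeLN f (encCBits C) = C := by
  induction C generalizing f with
  | nil => cases f <;> simp [encCBits, decodeLN]
  | cons g C ih =>
      cases f with
      | zero => simp at hf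
      | succ f =>
          have hne : encCBits (g :: C) ≠ [] := by
            simp only [encCBits]
            intro hc
            exact encNumBits_ne_nil _ (List.append_eq_nil_iff.mp hc).1
          obtain ⟨b, l, hbl⟩ : ∃ b l, encCBits (g :: C) = b :: l := by
            cases h : encCBits (g :: C) with
            | nil => exact absurd h hne
            | cons b l => exact ⟨b, l, rfl⟩
          rw [hbl]
          have hparse : parseNum (b :: l) 0 = (g, encCBits C) := by
            rw [← hbl]; exact parseNum_encGate g (encCBits C)
          simp only [decodeLN, hparse]
          exact congrArg (g :: ·) (ih f (by simpa using hf))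

lemma foldr_bit_ne_zero (l : List Bool) (h : ∀ hne : l ≠ [], l.getLast hne = true)
    (hne : l ≠ []) : l.foldr Nat.bit 0 ≠ 0 := by
  induction l with
  | nil => exact absurd rfl hne
  | cons b m ih =>
      simp only [List.foldr_cons]
      cases m with
      | nil =>
          have hb : b = true := h (by simp)
          subst hb
          simp [Nat.bit]
      | cons c m' =>
          have hm : (c :: m').foldr Nat.bit 0 ≠ 0 := by
            apply ih
            · intro hne'
              have := h (by simp)
              rwa [List.getLast_cons hne'] at this
            · simp
          intro hc
          exact hm (Nat.bit_eq_zero_iff.mp hc).1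

/-- The number whose bits are a given valid (ending in `true`) bit list. -/
lemma bits_foldr (l : List Bool) (h : ∀ hne : l ≠ [], l.getLast hne = true) :
    (l.foldr Nat.bit 0).bits = l := by
  induction l with
  | nil => simp
  | cons b m ih =>
      simp only [List.foldr_cons]
      cases hm : m with
      | nil =>
          have hb : b = true := by have := h (by simp); simpa [hm] using this
          subst hb hm
          simp only [List.foldr_nil]
          rw [Nat.bits_append_bit 0 true (fun _ => rfl)]
          simp
      | cons c m' =>
          subst hm
          have hlast : ∀ hne : (c :: m') ≠ [], (c :: m').getLast hne = true := by
            intro hne'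
            have := h (by simp)
            rwa [List.getLast_cons hne'] at this
          have hnz : (c :: m').foldr Nat.bit 0 ≠ 0 :=
            foldr_bit_ne_zero _ hlast (by simp)
          rw [Nat.bits_append_bit _ b (fun hc => absurd hc hnz)]
          rw [ih hlast]

lemma getLast?_append_ne_nil (l1 l2 : List Bool) (h : l2 ≠ []) :
    (l1 ++ l2).getLast? = l2.getLast? := by
  induction l1 with
  | nil => simp
  | cons a l1 ih =>
      rw [List.cons_append, getLast?_cons_ne_nil (by simp [h]), ih]

lemma encCBits_getLast? (C : List ℕ) (hne : encCBits C ≠ []) :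
    (encCBits C).getLast? = some true := by
  induction C with
  | nil => exact absurd rfl hne
  | cons g C ih =>
      simp only [encCBits] at *
      by_cases h : encCBits C = []
      · rw [h, List.append_nil]; exact encNumBits_getLast_nil _
      · rw [getLast?_append_ne_nil _ _ h]; exact ih h

/-- The natural number encoding a circuit. -/
def encNum (C : List ℕ) : ℕ := (encCBits C).foldr Nat.bit 0

lemma bits_encNum (C : List ℕ) : (encNum C).bits = encCBits C := by
  apply bits_foldr
  intro hne
  have h := encCBits_getLast? C hne
  rwa [List.getLast?_eq_getLast hne, Option.some.injEq] at h

lemma length_le_encCBits_length (C : List ℕ) : C.length ≤ (encCBits C).length := by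
  induction C with
  | nil => simp [encCBits]
  | cons g C ih =>
      simp only [encCBits, List.length_append, List.length_cons]
      have : 2 ≤ (encGate g).length := by rw [encGate_length]; omega
      omega

lemma cDecode_encNum (C : List ℕ) : cDecode (encNum C) = C := by
  rw [cDecode, bits_encNum]
  exact decodeLN_encCBits C _ (length_le_encCBits_length C)

lemma csize_encNum (C : List ℕ) : csize (encNum C) = C.length := by
  rw [csize, cDecode_encNum]

lemma cEval_encNum (C : List ℕ) (x : ℕ) :
    cEval (encNum C) x = cond (circEval C x.testBit) 1 0 := by
  rw [cEval, cDecode_encNum]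

lemma encCBits_length_le (C : List ℕ) (B : ℕ) (h : ∀ g ∈ C, Nat.size g ≤ B) :
    (encCBits C).length ≤ C.length * (2 * B + 2) := by
  induction C with
  | nil => simp [encCBits]
  | cons g C ih =>
      have hstep : encCBits (g :: C) = encGate g ++ encCBits C := rfl
      rw [hstep, List.length_append, encGate_length]
      have h1 : Nat.size g ≤ B := h g (by simp)
      have h2 := ih (fun g' hg' => h g' (by simp [hg']))
      rw [List.length_cons, add_mul, one_mul]
      omega

lemma size_encNum_le (C : List ℕ) (B : ℕ) (h : ∀ g ∈ C, Nat.size g ≤ B) :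
    Nat.size (encNum C) ≤ C.length * (2 * B + 2) := by
  have hlen : Nat.size (encNum C) = (encCBits C).length := by
    rw [← Nat.size_eq_bits_len, bits_encNum]
  rw [hlen]
  exact encCBits_length_le C B h

end Encoding

section Canon

/-- Canonical form of a gate at position `i`. -/
def canonGate (i g : ℕ) : ℕ :=
  if g.unpair.1 % 5 = 0 then Nat.pair 0 (g.unpair.2 % 2)
  else if g.unpair.1 % 5 = 1 then Nat.pair 1 (g.unpair.2 % (i + 1))
  else if g.unpair.1 % 5 = 2 then Nat.pair 2 (min g.unpair.2 i)
  else if g.unpair.1 % 5 = 3 then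
    Nat.pair 3 (Nat.pair (min g.unpair.2.unpair.1 i) (min g.unpair.2.unpair.2 i))
  else Nat.pair 4 (Nat.pair (min g.unpair.2.unpair.1 i) (min g.unpair.2.unpair.2 i))

lemma getD_min (l : List Bool) (a : ℕ) :
    (l[min a l.length]?).getD false = (l[a]?).getD false := by
  rcases Nat.lt_or_ge a l.length with h | h
  · rw [min_eq_left h.le]
  · rw [min_eq_right h]
    rw [List.getElem?_eq_none (le_refl _), List.getElem?_eq_none h]

lemma gateEval_canonGate (x : ℕ → Bool) (prev : List Bool) (g : ℕ) :
    gateEval x prev (canonGate prev.length g) = gateEval x prev g := by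
  unfold gateEval canonGate
  set t := g.unpair.1 % 5 with ht
  have h5 : t < 5 := Nat.mod_lt _ (by norm_num)
  interval_cases t <;>
    simp [Nat.unpair_pair, Nat.mod_mod_of_dvd, getD_min, List.getD]

/-- Canonical form of a circuit. -/
def canonC (C : List ℕ) : List ℕ := C.mapIdx canonGate

lemma foldl_canon (x : ℕ → Bool) (C : List ℕ) : ∀ prev : List Bool,
    (C.mapIdx (fun i g => canonGate (i + prev.length) g)).foldl
        (fun p g => p ++ [gateEval x p g]) prev
      = C.foldl (fun p g => p ++ [gateEval x p g]) prev := by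
  induction C with
  | nil => intro prev; simp
  | cons g C ih =>
      intro prev
      rw [List.mapIdx_cons, List.foldl_cons, List.foldl_cons]
      rw [show (0 : ℕ) + prev.length = prev.length from by omega]
      rw [gateEval_canonGate]
      have hlen : (prev ++ [gateEval x prev g]).length = prev.length + 1 := by simp
      have h2 := ih (prev ++ [gateEval x prev g])
      rw [hlen] at h2
      rw [← h2]
      have e : (fun (i : ℕ) (g' : ℕ) => canonGate (i + 1 + prev.length) g')
          = (fun (i : ℕ) (g' : ℕ) => canonGate (i + (prev.length + 1)) g') := by
        funext i g'
        congr 1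
        omega
      rw [e]

lemma circEvalList_canonC (C : List ℕ) (x : ℕ → Bool) :
    circEvalList (canonC C) x = circEvalList C x := by
  have h := foldl_canon x C []
  simp only [List.length_nil] at h
  have e : (fun (i : ℕ) (g' : ℕ) => canonGate (i + 0) g') = canonGate := by
    funext i g'
    rw [Nat.add_zero]
  rw [e] at h
  exact h

lemma circEval_canonC (C : List ℕ) (x : ℕ → Bool) :
    circEval (canonC C) x = circEval C x := by
  unfold circEval
  rw [circEvalList_canonC]

lemma canonC_length (C : List ℕ) : (canonC C).length = C.length := by
  simp [canonC]

lemma canonGate_le (i g : ℕ) : canonGate i g ≤ (2 * i + 6) ^ 4 := by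
  have key : ∀ t a : ℕ, t ≤ 4 → a ≤ (2 * i + 1) ^ 2 → Nat.pair t a ≤ (2 * i + 6) ^ 4 := by
    intro t a ht ha
    have h6 : (2*i+1)^2 + 5 ≤ (2*i+6)^2 := by
      have e : (2*i+6)^2 = (2*i+1)^2 + (20*i + 35) := by ring
      omega
    calc Nat.pair t a ≤ (t + a + 1) ^ 2 := pair_le_sq t a
      _ ≤ ((2 * i + 6) ^ 2) ^ 2 := by
          apply Nat.pow_le_pow_left
          linarith
      _ = (2 * i + 6) ^ 4 := by ring
  have hsq : ∀ a : ℕ, a ≤ i → a ≤ (2 * i + 1) ^ 2 := by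
    intro a ha
    have e : (2*i+1)^2 = 4*(i*i) + 4*i + 1 := by ring
    omega
  have hpairmin : ∀ a b : ℕ, Nat.pair (min a i) (min b i) ≤ (2 * i + 1) ^ 2 := by
    intro a b
    calc Nat.pair (min a i) (min b i) ≤ (min a i + min b i + 1) ^ 2 := pair_le_sq _ _
      _ ≤ (2 * i + 1) ^ 2 := by
          apply Nat.pow_le_pow_left
          have := min_le_right a i; have := min_le_right b i; omega
  unfold canonGate
  split
  · refine key _ _ (by omega) ?_
    have h1 : g.unpair.2 % 2 ≤ 1 := by omega
    have e : (2*i+1)^2 = 4*(i*i) + 4*i + 1 := by ring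
    omega
  split
  · refine key _ _ (by omega) (hsq _ ?_)
    have := Nat.mod_lt g.unpair.2 (show 0 < i + 1 by omega)
    omega
  split
  · exact key _ _ (by omega) (hsq _ (min_le_right _ _))
  split
  · exact key _ _ (by omega) (hpairmin _ _)
  · exact key _ _ (by omega) (hpairmin _ _)

lemma size_canonGate_le (i g : ℕ) : Nat.size (canonGate i g) ≤ 4 * (Nat.size i + 3) := by
  have h1 : Nat.size (canonGate i g) ≤ Nat.size ((2 * i + 6) ^ 4) :=
    Nat.size_le_size (canonGate_le i g)
  have h2 : Nat.size ((2 * i + 6) ^ 4) ≤ 4 * Nat.size (2 * i + 6) := by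
    have e : (2 * i + 6) ^ 4 = ((2*i+6) * (2*i+6)) * ((2*i+6) * (2*i+6)) := by ring
    rw [e]
    have a1 := size_mul_le ((2*i+6) * (2*i+6)) ((2*i+6) * (2*i+6))
    have a2 := size_mul_le (2*i+6) (2*i+6)
    omega
  have h3 : Nat.size (2 * i + 6) ≤ Nat.size i + 3 := by
    rw [Nat.size_le]
    have hi := self_lt_two_pow_size i
    have : (2:ℕ) ^ (Nat.size i + 3) = 8 * 2 ^ Nat.size i := by ring
    omega
  omega

end Canon

section HardLang

/-- The exponent constant. -/
def dd (k : ℕ) : ℕ := 9 * k + 28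

/-- Number of entries of the truth tables used at input length `n`. -/
def mv (k n : ℕ) : ℕ := 2 ^ (dd k * Nat.size n)

/-- Bound on the encoding length of canonical circuits of size `n^k`. -/
def Ev (k n : ℕ) : ℕ := n ^ k * (8 * (Nat.size (n ^ k) + 3) + 2)

/-- `T` is a truth table (on `mv k n` entries) hard for (encoded) circuits of size `n^k`. -/
def HardS (k n T : ℕ) : Prop :=
  ∀ c : ℕ, Nat.size c ≤ Ev k n → csize c ≤ n ^ k →
    ∃ y < mv k n, cEval c (2 ^ n / 2 + y) ≠ T / 2 ^ y % 2

def Sset (k n : ℕ) : Set ℕ := {T | Nat.size T ≤ mv k n ∧ HardS k n T}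

def Guard (k n : ℕ) : Prop := dd k * Nat.size n + dd k ≤ n

/-- Kannan-style hard language. -/
def hardL (k : ℕ) : Set ℕ :=
  {x | Guard k (len x) ∧ ∃ T ∈ Sset k (len x),
    (∀ T' < T, T' ∉ Sset k (len x)) ∧ T / 2 ^ (x % mv k (len x)) % 2 = 1}

lemma Ev_lt_mv (k n : ℕ) (hk : 1 ≤ k) (hn : 1 ≤ n) : Ev k n < mv k n := by
  set t := Nat.size n with htdef
  have ht : 1 ≤ t := Nat.size_pos.mpr hn
  have hnk : n ^ k < 2 ^ (k * t) := by
    calc n ^ k ≤ (2 ^ t - 1) ^ k := by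
          apply Nat.pow_le_pow_left
          have h := self_lt_two_pow_size n
          rw [← htdef] at h
          omega
      _ < 2 ^ (t * k) := by
          rw [pow_mul]
          apply Nat.pow_lt_pow_left _ (by omega)
          have : 0 < 2 ^ t := Nat.pow_pos (by norm_num)
          omega
      _ = 2 ^ (k * t) := by rw [Nat.mul_comm]
  have hsz : Nat.size (n ^ k) ≤ k * t := by
    rw [Nat.size_le]; exact hnk
  have hX : 8 * (Nat.size (n ^ k) + 3) + 2 ≤ 8 * (k * t) + 26 := by omega
  have step1 : 8 * (k * t) + 26 ≤ (8 * k + 26) * 2 ^ t := by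
    have h2t : t ≤ 2 ^ t := (Nat.lt_two_pow_self (n := t)).le
    calc 8 * (k * t) + 26 ≤ 8 * k * 2 ^ t + 26 * 2 ^ t := by
          have h1 : 8 * (k * t) ≤ 8 * k * 2 ^ t := by
            rw [Nat.mul_assoc]
            exact Nat.mul_le_mul_left _ (Nat.mul_le_mul_left _ h2t)
          have h2 : 26 ≤ 26 * 2 ^ t := by
            have : 1 ≤ 2 ^ t := Nat.one_le_two_pow
            omega
          omega
      _ = (8 * k + 26) * 2 ^ t := by ring
  have step2 : (8 * k + 26) < 2 ^ ((8 * k + 26) * t) := by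
    calc (8 * k + 26) < 2 ^ (8 * k + 26) := Nat.lt_two_pow_self
      _ ≤ 2 ^ ((8 * k + 26) * t) := by
          apply Nat.pow_le_pow_right (by norm_num)
          nlinarith
  calc Ev k n ≤ 2 ^ (k * t) * ((8 * k + 26) * 2 ^ t) := by
        apply Nat.mul_le_mul hnk.le
        omega
    _ < 2 ^ (k * t) * (2 ^ ((8 * k + 26) * t) * 2 ^ t) := by
        apply mul_lt_mul_of_pos_left _ (Nat.pow_pos (show 0 < 2 by norm_num))
        exact mul_lt_mul_of_pos_right step2 (Nat.pow_pos (by norm_num))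
    _ = 2 ^ (k * t + ((8 * k + 26) * t + t)) := by rw [← pow_add, ← pow_add]
    _ ≤ 2 ^ (dd k * t) := by
        apply Nat.pow_le_pow_right (by norm_num)
        have : dd k = 9 * k + 28 := rfl
        nlinarith
    _ = mv k n := rfl

lemma mv_le (k n : ℕ) (hn : 2 ≤ n) : mv k n ≤ n ^ (2 * dd k) := by
  have h1 : 2 ^ Nat.size n ≤ 2 * n := by
    have h2 := two_pow_pred_size_le n (by omega)
    have h3 : Nat.size n = Nat.size n - 1 + 1 := by
      have := Nat.size_pos.mpr (show 0 < n by omega); omega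
    calc 2 ^ Nat.size n = 2 ^ (Nat.size n - 1) * 2 := by rw [← pow_succ, ← h3]
      _ ≤ n * 2 := Nat.mul_le_mul_right _ h2
      _ = 2 * n := by ring
  calc mv k n = (2 ^ Nat.size n) ^ dd k := by rw [mv, ← pow_mul, Nat.mul_comm]
    _ ≤ (2 * n) ^ dd k := Nat.pow_le_pow_left h1 _
    _ ≤ (n * n) ^ dd k := Nat.pow_le_pow_left (by nlinarith) _
    _ = n ^ (2 * dd k) := by rw [show n * n = n ^ 2 from by ring, ← pow_mul]

lemma guard_eventually (k : ℕ) : ∀ n, 2 ^ (8 * dd k + 8) ≤ n → Guard k n := by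
  intro n hn
  set d := dd k with hd
  set t := Nat.size n with htdef
  have ht : 8 * d + 9 ≤ t := by
    have := Nat.size_le_size hn
    rwa [Nat.size_pow] at this
  have hn1 : 1 ≤ n := le_trans (Nat.one_le_two_pow) hn
  have hpred : 2 ^ (t - 1) ≤ n := two_pow_pred_size_le n hn1
  set e := (t - 1) / 2 with he
  have he1 : 2 * e ≤ t - 1 ∧ t - 1 ≤ 2 * e + 1 := by omega
  have hsplit : 2 ^ (t - 1) = 2 ^ e * 2 ^ (t - 1 - e) := by
    rw [← pow_add]; congr 1; omega
  have hq1 : e + 1 ≤ 2 ^ e := Nat.lt_two_pow_self (n := e)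
  have hq2 : t - e ≤ 2 ^ (t - 1 - e) := by
    have := Nat.lt_two_pow_self (n := t - 1 - e)
    omega
  have hprod : (e + 1) * (t - e) ≤ 2 ^ (t - 1) := by
    rw [hsplit]; exact Nat.mul_le_mul hq1 hq2
  have hgoal : d * t + d ≤ (e + 1) * (t - e) := by
    have h1 : 4 * d + 5 ≤ e + 1 := by omega
    have h2 : t + 1 ≤ 2 * (t - e) := by omega
    have h3 : (4 * d + 5) * (t + 1) ≤ (e + 1) * (2 * (t - e)) :=
      Nat.mul_le_mul h1 h2
    have h4 : (e + 1) * (2 * (t - e)) = 2 * ((e + 1) * (t - e)) := by ring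
    have h5 : (4 * d + 5) * (t + 1) = 4 * (d * t) + 4 * d + 5 * t + 5 := by ring
    omega
  have : d * t + d ≤ n := le_trans hgoal (le_trans hprod hpred)
  exact this

end HardLang

section Counting

lemma Sset_nonempty (k n : ℕ) (hk : 1 ≤ k) (hn : 1 ≤ n) : (Sset k n).Nonempty := by
  by_contra hemp
  rw [Set.not_nonempty_iff_eq_empty] at hemp
  have hall : ∀ T : ℕ, T < 2 ^ mv k n → ∃ c : ℕ, Nat.size c ≤ Ev k n ∧ csize c ≤ n ^ k ∧
      ∀ y < mv k n, cEval c (2 ^ n / 2 + y) = T / 2 ^ y % 2 := by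
    intro T hT
    have hTn : T ∉ Sset k n := by rw [hemp]; exact Set.notMem_empty T
    rw [Sset, Set.mem_setOf_eq] at hTn
    push_neg at hTn
    have hsz : Nat.size T ≤ mv k n := Nat.size_le.mpr hT
    have hnh := hTn hsz
    rw [HardS] at hnh
    push_neg at hnh
    obtain ⟨c, hc1, hc2, hc3⟩ := hnh
    exact ⟨c, hc1, hc2, hc3⟩
  classical
  choose f hf1 hf2 hf3 using hall
  have hinj : Set.InjOn (fun T : ℕ => if h : T < 2 ^ mv k n then f T h else 0)
      ↑(Finset.range (2 ^ mv k n)) := by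
    intro T1 h1 T2 h2 heq
    simp only [Finset.coe_range, Set.mem_Iio] at h1 h2
    simp only [dif_pos h1, dif_pos h2] at heq
    apply Nat.eq_of_testBit_eq
    intro i
    rcases Nat.lt_or_ge i (mv k n) with hi | hi
    · have e1 := hf3 T1 h1 i hi
      have e2 := hf3 T2 h2 i hi
      rw [heq] at e1
      rw [Nat.testBit_eq_decide_div_mod_eq, Nat.testBit_eq_decide_div_mod_eq, ← e1, ← e2]
    · have l1 : T1 < 2 ^ i := lt_of_lt_of_le h1 (Nat.pow_le_pow_right (by norm_num) hi)
      have l2 : T2 < 2 ^ i := lt_of_lt_of_le h2 (Nat.pow_le_pow_right (by norm_num) hi)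
      rw [Nat.testBit_lt_two_pow l1, Nat.testBit_lt_two_pow l2]
  have hmap : ∀ T ∈ Finset.range (2 ^ mv k n),
      (fun T : ℕ => if h : T < 2 ^ mv k n then f T h else 0) T ∈ Finset.range (2 ^ Ev k n) := by
    intro T hT
    rw [Finset.mem_range] at hT
    simp only [dif_pos hT, Finset.mem_range]
    exact Nat.size_le.mp (hf1 T hT)
  have hcard := Finset.card_le_card_of_injOn _ hmap hinj
  simp only [Finset.card_range] at hcard
  have : mv k n ≤ Ev k n := by
    by_contra hlt
    push_neg at hlt
    exact absurd hcard (by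
      apply Nat.not_le_of_lt
      exact Nat.pow_lt_pow_right (by norm_num) hlt)
  exact absurd this (Nat.not_le_of_lt (Ev_lt_mv k n hk hn))

end Counting

section Transfer

lemma pow_div_two (n : ℕ) (hn : 1 ≤ n) : 2 ^ n / 2 = 2 ^ (n - 1) := by
  have h : n = n - 1 + 1 := by omega
  conv_lhs => rw [h]
  rw [pow_succ, Nat.mul_div_cancel _ (by norm_num)]

lemma size_slice (n y : ℕ) (hn : 1 ≤ n) (hy : y < 2 ^ (n - 1)) :
    len (2 ^ n / 2 + y) = n := by
  rw [len, pow_div_two n hn]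
  apply le_antisymm
  · rw [Nat.size_le]
    have : 2 ^ (n - 1) + 2 ^ (n - 1) = 2 ^ n := by
      have h2 : 2 ^ (n - 1) * 2 = 2 ^ n := by
        rw [← pow_succ]; congr 1; omega
      omega
    omega
  · have : 2 ^ (n - 1) ≤ 2 ^ (n - 1) + y := by omega
    have h2 := Nat.lt_size.mpr this
    omega

lemma mod_slice (n m y : ℕ) (hm : m ≤ n - 1) (hy : y < 2 ^ m) :
    (2 ^ n / 2 + y) % 2 ^ m = y := by
  rcases Nat.eq_zero_or_pos n with h | h
  · subst h
    norm_num
    exact Nat.mod_eq_of_lt hy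
  · rw [pow_div_two n h, show n - 1 = m + (n - 1 - m) from by omega, pow_add,
      Nat.mul_add_mod, Nat.mod_eq_of_lt hy]

/-- Membership characterization on slices where the guard holds. -/
lemma hardL_slice (k n : ℕ) (hk : 1 ≤ k) (hn : 1 ≤ n) (hg : Guard k n)
    (x : ℕ) (hx : len x = n) :
    x ∈ hardL k ↔ sInf (Sset k n) / 2 ^ (x % mv k n) % 2 = 1 := by
  have hne := Sset_nonempty k n hk hn
  have hmem := Nat.sInf_mem hne
  constructor
  · rintro ⟨-, T, hT, hmin, hbit⟩
    rw [hx] at hT hmin hbit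
    have h1 : sInf (Sset k n) ≤ T := Nat.sInf_le hT
    have h2 : ¬ sInf (Sset k n) < T := fun hlt => hmin _ hlt hmem
    have : sInf (Sset k n) = T := by omega
    rw [this]; exact hbit
  · intro hbit
    refine ⟨by rwa [hx], sInf (Sset k n), ?_, ?_, ?_⟩
    · rwa [hx]
    · rw [hx]; exact fun T' hT' => Nat.notMem_of_lt_sInf hT'
    · rwa [hx]

lemma not_hasCircAt (k n : ℕ) (hk : 1 ≤ k) (hg : Guard k n)
    (hn : 2 ^ (8 * dd k + 8) ≤ n) :
    ¬ HasCircAt (hardL k) n (n ^ k) := by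
  have hn1 : 1 ≤ n := le_trans Nat.one_le_two_pow hn
  rintro ⟨C, hlen, hC⟩
  set T₀ := sInf (Sset k n) with hT₀
  have hmem : T₀ ∈ Sset k n := Nat.sInf_mem (Sset_nonempty k n hk hn1)
  -- encode the canonical form of C
  set c := encNum (canonC C) with hc
  have hgate : ∀ g ∈ canonC C, Nat.size g ≤ 4 * (Nat.size (n ^ k) + 3) := by
    intro g hgmem
    rw [canonC] at hgmem
    obtain ⟨i, hi, rfl⟩ : ∃ i : Fin C.length, canonGate i.1 (C.get i) = g := by
      rcases List.mem_iff_get.mp hgmem with ⟨j, hj⟩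
      have hlen2 : (List.mapIdx canonGate C).length = C.length := by simp
      refine ⟨⟨j.1, by omega⟩, ?_⟩
      rw [← hj]
      rw [List.get_eq_getElem, List.get_eq_getElem, List.getElem_mapIdx]
    calc Nat.size (canonGate i.1 (C.get i)) ≤ 4 * (Nat.size i.1 + 3) :=
          size_canonGate_le _ _
      _ ≤ 4 * (Nat.size (n ^ k) + 3) := by
          have : (i : ℕ) ≤ n ^ k := le_trans (le_of_lt i.isLt) hlen
          have := Nat.size_le_size this
          omega
  have hsizec : Nat.size c ≤ Ev k n := by
    calc Nat.size c ≤ (canonC C).length * (2 * (4 * (Nat.size (n ^ k) + 3)) + 2) :=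
          size_encNum_le _ _ hgate
      _ ≤ n ^ k * (8 * (Nat.size (n ^ k) + 3) + 2) := by
          rw [canonC_length]
          apply Nat.mul_le_mul hlen
          omega
      _ = Ev k n := rfl
  have hcsz : csize c ≤ n ^ k := by
    rw [hc, csize_encNum, canonC_length]; exact hlen
  obtain ⟨T0mem, hhard⟩ := hmem
  obtain ⟨y, hy, hne⟩ := hhard c hsizec hcsz
  -- the input
  set z := 2 ^ n / 2 + y with hz
  have hmv_le : mv k n ≤ 2 ^ (n - 1) := by
    rw [mv]
    apply Nat.pow_le_pow_right (by norm_num)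
    have : dd k * Nat.size n + dd k ≤ n := hg
    have hd : 1 ≤ dd k := by rw [dd]; omega
    omega
  have hyn : y < 2 ^ (n - 1) := lt_of_lt_of_le hy hmv_le
  have hzlen : len z = n := size_slice n y hn1 hyn
  have hzmod : z % mv k n = y := by
    rw [hz, mv]
    apply mod_slice
    · have hd : 1 ≤ dd k := by rw [dd]; omega
      have : dd k * Nat.size n + dd k ≤ n := hg
      omega
    · rw [← mv]; exact hy
  have hcirc := hC z hzlen
  have hL := hardL_slice k n hk hn1 hg z hzlen
  have hceval : cEval c z = cond (circEval C z.testBit) 1 0 := by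
    rw [hc, cEval_encNum, circEval_canonC]
  have hmod2 : T₀ / 2 ^ y % 2 = 0 ∨ T₀ / 2 ^ y % 2 = 1 := Nat.mod_two_eq_zero_or_one _
  rw [hzmod] at hL
  cases hcb : circEval C z.testBit with
  | true =>
      have hzL : z ∈ hardL k := hcirc.mp hcb
      have hbit : T₀ / 2 ^ y % 2 = 1 := hL.mp hzL
      rw [hceval, hcb, hbit] at hne
      simp at hne
  | false =>
      have hzL : z ∉ hardL k := fun h => by rw [hcirc.mpr h] at hcb; simp at hcb
      have hbit : T₀ / 2 ^ y % 2 ≠ 1 := fun h => hzL (hL.mpr h)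
      have hbit0 : T₀ / 2 ^ y % 2 = 0 := by omega
      rw [hceval, hcb, hbit0] at hne
      simp at hne

lemma hardL_not_ioSIZE (k : ℕ) (hk : 1 ≤ k) : hardL k ∉ ioSIZE (fun n => n ^ k) := by
  intro hio
  obtain ⟨n, hn, hcirc⟩ := hio (2 ^ (8 * dd k + 8))
  exact not_hasCircAt k n hk (guard_eventually k n hn) hn hcirc

end Transfer

section PTFTools

open Classical in
/-- Indicator of a proposition. -/
noncomputable def tb (p : Prop) : ℕ := if p then 1 else 0

lemma tb_eq_one {p : Prop} : tb p = 1 ↔ p := by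
  by_cases h : p <;> simp [tb, h]

lemma tb_and (p q : Prop) : tb (p ∧ q) = tb p * tb q := by
  by_cases hp : p <;> by_cases hq : q <;> simp [tb, hp, hq]

lemma tb_imp (p q : Prop) : tb (p → q) = 1 - tb p * (1 - tb q) := by
  by_cases hp : p <;> by_cases hq : q <;> simp [tb, hp, hq]

lemma tb_or (p q : Prop) : tb (p ∨ q) = 1 - (1 - tb p) * (1 - tb q) := by
  by_cases hp : p <;> by_cases hq : q <;> simp [tb, hp, hq]

lemma tb_not (p : Prop) : tb (¬ p) = 1 - tb p := by
  by_cases hp : p <;> simp [tb, hp]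

lemma ptf_congr {f g : ℕ → ℕ} (h : ∀ z, f z = g z) (hf : PTF f) : PTF g := by
  have : f = g := funext h
  rwa [this] at hf

lemma PTF.ite' {c a b : ℕ → ℕ} (hc : PTF c) (ha : PTF a) (hb : PTF b) :
    PTF (fun z => if c z = 0 then a z else b z) := by
  have h := PTF.ite0.comp (hc.pairF (ha.pairF hb))
  apply ptf_congr _ h
  intro z
  simp [Nat.unpair_pair]

lemma PTF.tb_le {f g : ℕ → ℕ} (hf : PTF f) (hg : PTF g) :
    PTF (fun z => tb (f z ≤ g z)) := by
  have h := PTF.ite' (PTF.comp2 PTF.sub hf hg) (PTF.const 1) (PTF.const 0)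
  apply ptf_congr _ h
  intro z
  by_cases hle : f z ≤ g z
  · rw [if_pos (by omega), tb_eq_one.mpr hle]
  · rw [if_neg (by omega)]
    have : ¬ (f z ≤ g z) := hle
    simp [tb, this]

lemma PTF.tb_lt {f g : ℕ → ℕ} (hf : PTF f) (hg : PTF g) :
    PTF (fun z => tb (f z < g z)) := by
  have h := PTF.tb_le (PTF.comp2 PTF.add hf (PTF.const 1)) hg
  apply ptf_congr _ h
  intro z
  congr 1

lemma PTF.tb_eq {f g : ℕ → ℕ} (hf : PTF f) (hg : PTF g) :
    PTF (fun z => tb (f z = g z)) := by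
  have h := PTF.ite' (PTF.comp2 PTF.add (PTF.comp2 PTF.sub hf hg) (PTF.comp2 PTF.sub hg hf))
    (PTF.const 1) (PTF.const 0)
  apply ptf_congr _ h
  intro z
  by_cases he : f z = g z
  · rw [if_pos (by omega), tb_eq_one.mpr he]
  · rw [if_neg (by omega)]
    simp [tb, he]

lemma PTF.tb_and' {P Q : ℕ → Prop} (hP : PTF (fun z => tb (P z))) (hQ : PTF (fun z => tb (Q z))) :
    PTF (fun z => tb (P z ∧ Q z)) := by
  have h := PTF.comp2 PTF.mul hP hQ
  exact ptf_congr (fun z => (tb_and _ _).symm) h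

lemma PTF.tb_imp' {P Q : ℕ → Prop} (hP : PTF (fun z => tb (P z))) (hQ : PTF (fun z => tb (Q z))) :
    PTF (fun z => tb (P z → Q z)) := by
  have h := PTF.comp2 PTF.sub (PTF.const 1)
    (PTF.comp2 PTF.mul hP (PTF.comp2 PTF.sub (PTF.const 1) hQ))
  exact ptf_congr (fun z => (tb_imp _ _).symm) h

lemma PTF.tb_or' {P Q : ℕ → Prop} (hP : PTF (fun z => tb (P z))) (hQ : PTF (fun z => tb (Q z))) :
    PTF (fun z => tb (P z ∨ Q z)) := by
  have h := PTF.comp2 PTF.sub (PTF.const 1)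
    (PTF.comp2 PTF.mul (PTF.comp2 PTF.sub (PTF.const 1) hP)
      (PTF.comp2 PTF.sub (PTF.const 1) hQ))
  exact ptf_congr (fun z => (tb_or _ _).symm) h

lemma PTF.tb_ne {f g : ℕ → ℕ} (hf : PTF f) (hg : PTF g) :
    PTF (fun z => tb (f z ≠ g z)) := by
  have h := PTF.comp2 PTF.sub (PTF.const 1) (PTF.tb_eq hf hg)
  exact ptf_congr (fun z => (tb_not _).symm) h

lemma tb_congr {P Q : ℕ → Prop} (h : ∀ z, P z ↔ Q z) (hP : PTF (fun z => tb (P z))) :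
    PTF (fun z => tb (Q z)) := by
  apply ptf_congr _ hP
  intro z
  by_cases hp : P z
  · rw [tb_eq_one.mpr hp, Eq.comm, tb_eq_one]
    exact (h z).mp hp
  · have hq : ¬ Q z := fun hq => hp ((h z).mpr hq)
    simp [tb, hp, hq]

end PTFTools

section Formula

/-- The quantifier-free matrix of the `Σᵖ₄`-definition of `hardL`. -/
def Phi (k x T u c T' y1 c' V : ℕ) : Prop :=
  Guard k (Nat.size x) ∧
  Nat.size T ≤ mv k (Nat.size x) ∧
  Nat.size u = x % mv k (Nat.size x) ∧
  T / 2 ^ Nat.size u % 2 = 1 ∧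
  (Nat.size c ≤ Ev k (Nat.size x) ∧ csize c ≤ Nat.size x ^ k →
    Nat.size y1 < mv k (Nat.size x) ∧
      cEval c (2 ^ Nat.size x / 2 + Nat.size y1) ≠ T / 2 ^ Nat.size y1 % 2) ∧
  (T' < T →
    mv k (Nat.size x) < Nat.size T' ∨
      (Nat.size c' ≤ Ev k (Nat.size x) ∧ csize c' ≤ Nat.size x ^ k ∧
        (Nat.size V < mv k (Nat.size x) →
          cEval c' (2 ^ Nat.size x / 2 + Nat.size V) = T' / 2 ^ Nat.size V % 2)))

/-- The matrix, with all variables decoded from a single input. -/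
def PhiZ (k z : ℕ) : Prop :=
  Phi k z.unpair.1.unpair.1.unpair.1.unpair.1
    z.unpair.1.unpair.1.unpair.1.unpair.2.unpair.1
    z.unpair.1.unpair.1.unpair.1.unpair.2.unpair.2
    z.unpair.1.unpair.1.unpair.2.unpair.1
    z.unpair.1.unpair.1.unpair.2.unpair.2
    z.unpair.1.unpair.2.unpair.1
    z.unpair.1.unpair.2.unpair.2
    z.unpair.2

lemma ptf_two_pow_size {f : ℕ → ℕ} (hf : PTF f) : PTF (fun z => 2 ^ Nat.size (f z)) := by
  have h := PTF.smash.comp (hf.pairF (PTF.const 1))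
  apply ptf_congr _ h
  intro z
  simp [Nat.unpair_pair, len, Nat.size_one]

lemma ptf_fPhi (k : ℕ) : PTF (fun z => tb (PhiZ k z)) := by
  -- extractors
  have hxF : PTF (fun z : ℕ => z.unpair.1.unpair.1.unpair.1.unpair.1) :=
    PTF.up1.comp (PTF.up1.comp (PTF.up1.comp PTF.up1))
  have hYF : PTF (fun z : ℕ => z.unpair.1.unpair.1.unpair.1.unpair.2) :=
    PTF.up2.comp (PTF.up1.comp (PTF.up1.comp PTF.up1))
  have hTF : PTF (fun z : ℕ => z.unpair.1.unpair.1.unpair.1.unpair.2.unpair.1) :=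
    PTF.up1.comp hYF
  have huF : PTF (fun z : ℕ => z.unpair.1.unpair.1.unpair.1.unpair.2.unpair.2) :=
    PTF.up2.comp hYF
  have hZF : PTF (fun z : ℕ => z.unpair.1.unpair.1.unpair.2) :=
    PTF.up2.comp (PTF.up1.comp PTF.up1)
  have hcF : PTF (fun z : ℕ => z.unpair.1.unpair.1.unpair.2.unpair.1) := PTF.up1.comp hZF
  have hT'F : PTF (fun z : ℕ => z.unpair.1.unpair.1.unpair.2.unpair.2) := PTF.up2.comp hZF
  have hWF : PTF (fun z : ℕ => z.unpair.1.unpair.2) := PTF.up2.comp PTF.up1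
  have hy1F : PTF (fun z : ℕ => z.unpair.1.unpair.2.unpair.1) := PTF.up1.comp hWF
  have hc'F : PTF (fun z : ℕ => z.unpair.1.unpair.2.unpair.2) := PTF.up2.comp hWF
  have hVF : PTF (fun z : ℕ => z.unpair.2) := PTF.up2
  set xF := fun z : ℕ => z.unpair.1.unpair.1.unpair.1.unpair.1 with hxFdef
  -- derived numeric functions
  have hnF : PTF (fun z : ℕ => Nat.size (xF z)) := PTF.lenB.comp hxF
  have hsnF : PTF (fun z : ℕ => Nat.size (Nat.size (xF z))) := PTF.lenB.comp hnF
  have hmvF : PTF (fun z : ℕ => mv k (Nat.size (xF z))) := by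
    have h := PTF.smash.comp (hnF.pairF (PTF.const (2 ^ dd k - 1)))
    apply ptf_congr _ h
    intro z
    simp only [Nat.unpair_pair, len, size_pow_pred, mv]
    rw [Nat.mul_comm]
  have hpw : PTF (fun z : ℕ => 2 ^ Nat.size (xF z) / 2) :=
    PTF.comp2 PTF.div (ptf_two_pow_size hxF) (PTF.const 2)
  have hnkF : PTF (fun z : ℕ => Nat.size (xF z) ^ k) := (PTF.powc k).comp hnF
  have hEvF : PTF (fun z : ℕ => Ev k (Nat.size (xF z))) := by
    have h := PTF.comp2 PTF.mul hnkF
      (PTF.comp2 PTF.add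
        (PTF.comp2 PTF.mul (PTF.const 8)
          (PTF.comp2 PTF.add (PTF.lenB.comp hnkF) (PTF.const 3)))
        (PTF.const 2))
    exact ptf_congr (fun z => rfl) h
  -- conjunct 1 : Guard
  have hC1 : PTF (fun z => tb (Guard k (Nat.size (xF z)))) := by
    have h := PTF.tb_le
      (PTF.comp2 PTF.add (PTF.comp2 PTF.mul (PTF.const (dd k)) hsnF) (PTF.const (dd k)))
      hnF
    exact tb_congr (fun z => Iff.rfl) h
  -- conjunct 2
  have hC2 : PTF (fun z => tb (Nat.size (z.unpair.1.unpair.1.unpair.1.unpair.2.unpair.1)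
      ≤ mv k (Nat.size (xF z)))) :=
    PTF.tb_le (PTF.lenB.comp hTF) hmvF
  -- conjunct 3
  have hC3 : PTF (fun z => tb (Nat.size (z.unpair.1.unpair.1.unpair.1.unpair.2.unpair.2)
      = xF z % mv k (Nat.size (xF z)))) :=
    PTF.tb_eq (PTF.lenB.comp huF) (PTF.comp2 PTF.mod hxF hmvF)
  -- conjunct 4
  have hC4 : PTF (fun z => tb (z.unpair.1.unpair.1.unpair.1.unpair.2.unpair.1
      / 2 ^ Nat.size (z.unpair.1.unpair.1.unpair.1.unpair.2.unpair.2) % 2 = 1)) :=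
    PTF.tb_eq
      (PTF.comp2 PTF.mod (PTF.comp2 PTF.div hTF (ptf_two_pow_size huF)) (PTF.const 2))
      (PTF.const 1)
  -- conjunct 5
  have hC5 : PTF (fun z => tb
      ((Nat.size (z.unpair.1.unpair.1.unpair.2.unpair.1) ≤ Ev k (Nat.size (xF z)) ∧
        csize (z.unpair.1.unpair.1.unpair.2.unpair.1) ≤ Nat.size (xF z) ^ k) →
      (Nat.size (z.unpair.1.unpair.2.unpair.1) < mv k (Nat.size (xF z)) ∧
        cEval (z.unpair.1.unpair.1.unpair.2.unpair.1)
            (2 ^ Nat.size (xF z) / 2 + Nat.size (z.unpair.1.unpair.2.unpair.1))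
          ≠ z.unpair.1.unpair.1.unpair.1.unpair.2.unpair.1
            / 2 ^ Nat.size (z.unpair.1.unpair.2.unpair.1) % 2))) := by
    apply PTF.tb_imp'
    · exact PTF.tb_and' (PTF.tb_le (PTF.lenB.comp hcF) hEvF)
        (PTF.tb_le (PTF.csizeB.comp hcF) hnkF)
    · apply PTF.tb_and'
      · exact PTF.tb_lt (PTF.lenB.comp hy1F) hmvF
      · exact PTF.tb_ne
          (PTF.comp2 PTF.cEvalB hcF
            (PTF.comp2 PTF.add hpw (PTF.lenB.comp hy1F)))
          (PTF.comp2 PTF.mod (PTF.comp2 PTF.div hTF (ptf_two_pow_size hy1F)) (PTF.const 2))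
  -- conjunct 6
  have hC6 : PTF (fun z => tb
      (z.unpair.1.unpair.1.unpair.2.unpair.2 < z.unpair.1.unpair.1.unpair.1.unpair.2.unpair.1 →
        (mv k (Nat.size (xF z)) < Nat.size (z.unpair.1.unpair.1.unpair.2.unpair.2) ∨
          (Nat.size (z.unpair.1.unpair.2.unpair.2) ≤ Ev k (Nat.size (xF z)) ∧
            csize (z.unpair.1.unpair.2.unpair.2) ≤ Nat.size (xF z) ^ k ∧
            (Nat.size z.unpair.2 < mv k (Nat.size (xF z)) →
              cEval (z.unpair.1.unpair.2.unpair.2)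
                  (2 ^ Nat.size (xF z) / 2 + Nat.size z.unpair.2)
                = z.unpair.1.unpair.1.unpair.2.unpair.2
                  / 2 ^ Nat.size z.unpair.2 % 2))))) := by
    apply PTF.tb_imp'
    · exact PTF.tb_lt hT'F hTF
    · apply PTF.tb_or'
      · exact PTF.tb_lt hmvF (PTF.lenB.comp hT'F)
      · apply PTF.tb_and'
        · exact PTF.tb_le (PTF.lenB.comp hc'F) hEvF
        · apply PTF.tb_and'
          · exact PTF.tb_le (PTF.csizeB.comp hc'F) hnkF
          · apply PTF.tb_imp'
            · exact PTF.tb_lt (PTF.lenB.comp hVF) hmvF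
            · exact PTF.tb_eq
                (PTF.comp2 PTF.cEvalB hc'F
                  (PTF.comp2 PTF.add hpw (PTF.lenB.comp hVF)))
                (PTF.comp2 PTF.mod
                  (PTF.comp2 PTF.div hT'F (ptf_two_pow_size hVF)) (PTF.const 2))
  have hall := PTF.tb_and' hC1 (PTF.tb_and' hC2 (PTF.tb_and' hC3
    (PTF.tb_and' hC4 (PTF.tb_and' hC5 hC6))))
  exact tb_congr (fun z => Iff.rfl) hall

end Formula

section Levels

def c0 (k : ℕ) : ℕ := 3 * dd k

def L4 (k : ℕ) : Set ℕ := {z | PhiZ k z}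
def L3 (k : ℕ) : Set ℕ := {w | ∃ V, len V ≤ len w ^ c0 k + c0 k ∧ Nat.pair w V ∉ L4 k}
def L2 (k : ℕ) : Set ℕ := {w | ∃ W, len W ≤ len w ^ c0 k + c0 k ∧ Nat.pair w W ∉ L3 k}
def L1 (k : ℕ) : Set ℕ := {w | ∃ Z, len Z ≤ len w ^ c0 k + c0 k ∧ Nat.pair w Z ∉ L2 k}

lemma L4_SigmaP0 (k : ℕ) : L4 k ∈ SigmaP 0 := by
  refine ⟨fun z => tb (PhiZ k z), ptf_fPhi k, fun x => ?_⟩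
  rw [tb_eq_one]
  rfl

lemma L3_SigmaP1 (k : ℕ) : L3 k ∈ SigmaP 1 :=
  ⟨c0 k, L4 k, L4_SigmaP0 k, fun _ => Iff.rfl⟩

lemma L2_SigmaP2 (k : ℕ) : L2 k ∈ SigmaP 2 :=
  ⟨c0 k, L3 k, L3_SigmaP1 k, fun _ => Iff.rfl⟩

lemma L1_SigmaP3 (k : ℕ) : L1 k ∈ SigmaP 3 :=
  ⟨c0 k, L2 k, L2_SigmaP2 k, fun _ => Iff.rfl⟩

lemma PhiZ_pair (k x Y Z W V : ℕ) :
    PhiZ k (Nat.pair (Nat.pair (Nat.pair (Nat.pair x Y) Z) W) V)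
      ↔ Phi k x Y.unpair.1 Y.unpair.2 Z.unpair.1 Z.unpair.2 W.unpair.1 W.unpair.2 V := by
  simp only [PhiZ, Nat.unpair_pair]

lemma guard_ge (k n : ℕ) (hg : Guard k n) : 2 * dd k ≤ n := by
  have hd : 28 ≤ dd k := by rw [dd]; omega
  rcases Nat.eq_zero_or_pos n with h | h
  · exfalso
    rw [Guard, h] at hg
    simp [Nat.size_zero] at hg
    omega
  · have hs : 1 ≤ Nat.size n := Nat.size_pos.mpr h
    rw [Guard] at hg
    nlinarith

lemma key_bound (k n : ℕ) (hg : Guard k n) : 4 * mv k n + 6 ≤ n ^ c0 k + c0 k := by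
  have hd : 28 ≤ dd k := by rw [dd]; omega
  have hn : 2 * dd k ≤ n := guard_ge k n hg
  have h2 : 2 ≤ n := by omega
  have hm := mv_le k n h2
  have h1 : 4 * n ^ (2 * dd k) ≤ n ^ (2 * dd k + 1) := by
    rw [pow_succ]
    calc 4 * n ^ (2 * dd k) = n ^ (2 * dd k) * 4 := by ring
      _ ≤ n ^ (2 * dd k) * n := Nat.mul_le_mul_left _ (by omega)
  have h3 : n ^ (2 * dd k + 1) ≤ n ^ c0 k := by
    apply Nat.pow_le_pow_right (by omega)
    rw [c0]; omega
  have h6 : 6 ≤ c0 k := by rw [c0]; omega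
  omega

lemma bd_mono (k a b : ℕ) (h : a ≤ b) :
    Nat.size a ^ c0 k + c0 k ≤ Nat.size b ^ c0 k + c0 k := by
  have := Nat.size_le_size h
  have := Nat.pow_le_pow_left (Nat.size_le_size h) (c0 k)
  omega

end Levels

section MainIff

lemma main_fwd (k : ℕ) (hk : 1 ≤ k) (x : ℕ) (hx : x ∈ hardL k) :
    ∃ Y, len Y ≤ len x ^ c0 k + c0 k ∧ Nat.pair x Y ∉ L1 k := by
  obtain ⟨hg, T, ⟨hTsz, hThard⟩, hmin, hbit⟩ := hx
  simp only [len] at hg hTsz hThard hmin hbit ⊢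
  have hgn : Guard k (Nat.size x) := hg
  have hmvpos : 0 < mv k (Nat.size x) := Nat.pow_pos (by norm_num)
  have hxmod : x % mv k (Nat.size x) < mv k (Nat.size x) := Nat.mod_lt _ hmvpos
  have hn1 : 1 ≤ Nat.size x := by
    have h1 := guard_ge k _ hgn
    have h2 : 28 ≤ dd k := by rw [dd]; omega
    omega
  set u := 2 ^ (x % mv k (Nat.size x)) - 1 with hu
  have husz : Nat.size u = x % mv k (Nat.size x) := size_pow_pred _
  refine ⟨Nat.pair T u, ?_, ?_⟩
  · have h1 : Nat.size (Nat.pair T u) ≤ 2 * (Nat.size T + Nat.size u) + 6 := size_pair_le _ _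
    have h2 := key_bound k (Nat.size x) hgn
    omega
  · rintro ⟨Z, hZbd, hZnot⟩
    apply hZnot
    have hW1 : ∃ y1 : ℕ, Nat.size y1 ≤ mv k (Nat.size x) ∧
        ((Nat.size Z.unpair.1 ≤ Ev k (Nat.size x) ∧ csize Z.unpair.1 ≤ Nat.size x ^ k) →
          Nat.size y1 < mv k (Nat.size x) ∧
            cEval Z.unpair.1 (2 ^ Nat.size x / 2 + Nat.size y1)
              ≠ T / 2 ^ Nat.size y1 % 2) := by
      by_cases hcOK : Nat.size Z.unpair.1 ≤ Ev k (Nat.size x) ∧ csize Z.unpair.1 ≤ Nat.size x ^ k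
      · obtain ⟨y, hy, hne⟩ := hThard Z.unpair.1 hcOK.1 hcOK.2
        refine ⟨2 ^ y - 1, ?_, fun _ => ?_⟩
        · rw [size_pow_pred]; omega
        · rw [size_pow_pred]; exact ⟨hy, hne⟩
      · exact ⟨0, by simp, fun h => absurd h hcOK⟩
    have hW2 : ∃ c' : ℕ, Nat.size c' ≤ mv k (Nat.size x) ∧
        (Z.unpair.2 < T →
          mv k (Nat.size x) < Nat.size Z.unpair.2 ∨
            (Nat.size c' ≤ Ev k (Nat.size x) ∧ csize c' ≤ Nat.size x ^ k ∧
              ∀ y < mv k (Nat.size x),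
                cEval c' (2 ^ Nat.size x / 2 + y) = Z.unpair.2 / 2 ^ y % 2)) := by
      by_cases hT'lt : Z.unpair.2 < T
      · have hT'not := hmin Z.unpair.2 hT'lt
        rw [Sset, Set.mem_setOf_eq] at hT'not
        push_neg at hT'not
        by_cases hszT' : Nat.size Z.unpair.2 ≤ mv k (Nat.size x)
        · have hnh := hT'not hszT'
          rw [HardS] at hnh
          push_neg at hnh
          obtain ⟨c1, hc11, hc12, hc13⟩ := hnh
          exact ⟨c1, le_trans hc11 (le_of_lt (Ev_lt_mv k _ hk hn1)),
            fun _ => Or.inr ⟨hc11, hc12, hc13⟩⟩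
        · exact ⟨0, by simp, fun _ => Or.inl (by omega)⟩
      · exact ⟨0, by simp, fun h => absurd h hT'lt⟩
    obtain ⟨y1, hy1sz, hy1⟩ := hW1
    obtain ⟨c', hc'sz, hc'⟩ := hW2
    refine ⟨Nat.pair y1 c', ?_, ?_⟩
    · have h1 := size_pair_le y1 c'
      have h2 := key_bound k (Nat.size x) hgn
      have h3 : Nat.size x ^ c0 k + c0 k
          ≤ Nat.size (Nat.pair (Nat.pair x (Nat.pair T u)) Z) ^ c0 k + c0 k :=
        bd_mono k _ _ (le_trans (le_pair_left _ _) (le_pair_left _ _))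
      simp only [len]
      omega
    · rintro ⟨V, hVbd, hVnot⟩
      apply hVnot
      show PhiZ k _
      rw [PhiZ_pair]
      simp only [Nat.unpair_pair]
      refine ⟨hgn, hTsz, husz, ?_, ?_, ?_⟩
      · rw [husz]; exact hbit
      · exact hy1
      · intro hlt
        rcases hc' hlt with h | ⟨h1, h2, h3⟩
        · exact Or.inl h
        · exact Or.inr ⟨h1, h2, fun hVlt => h3 _ hVlt⟩

lemma main_bwd (k : ℕ) (hk : 1 ≤ k) (x : ℕ)
    (h : ∃ Y, len Y ≤ len x ^ c0 k + c0 k ∧ Nat.pair x Y ∉ L1 k) : x ∈ hardL k := by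
  obtain ⟨Y, hYbd, hYnot⟩ := h
  have hall : ∀ Z, Nat.size Z ≤ Nat.size (Nat.pair x Y) ^ c0 k + c0 k →
      ∃ W, ∀ V,
        Nat.size V ≤ Nat.size (Nat.pair (Nat.pair (Nat.pair x Y) Z) W) ^ c0 k + c0 k →
          Phi k x Y.unpair.1 Y.unpair.2 Z.unpair.1 Z.unpair.2 W.unpair.1 W.unpair.2 V := by
    intro Z hZ
    by_contra hno
    push_neg at hno
    apply hYnot
    refine ⟨Z, hZ, ?_⟩
    intro hL2mem
    obtain ⟨W, hWbd, hWnot⟩ := hL2mem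
    obtain ⟨V, hVbd, hVnphi⟩ := hno W
    apply hWnot
    refine ⟨V, hVbd, ?_⟩
    intro hL4mem
    exact hVnphi ((PhiZ_pair k x Y Z W V).mp hL4mem)
  -- extract the basic conjuncts
  obtain ⟨W0, hV0⟩ := hall 0 (by simp)
  have φ0 := hV0 0 (by simp)
  have hg : Guard k (Nat.size x) := φ0.1
  have hTsz : Nat.size Y.unpair.1 ≤ mv k (Nat.size x) := φ0.2.1
  have huu : Nat.size Y.unpair.2 = x % mv k (Nat.size x) := φ0.2.2.1
  have hbit : Y.unpair.1 / 2 ^ Nat.size Y.unpair.2 % 2 = 1 := φ0.2.2.2.1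
  have hn1 : 1 ≤ Nat.size x := by
    have := guard_ge k _ hg; have : 28 ≤ dd k := by rw [dd]; omega
    omega
  have hkey := key_bound k (Nat.size x) hg
  have hEv := Ev_lt_mv k (Nat.size x) hk hn1
  -- HardS
  have hHard : HardS k (Nat.size x) Y.unpair.1 := by
    intro c hc1 hc2
    have hZbd : Nat.size (Nat.pair c 0) ≤ Nat.size (Nat.pair x Y) ^ c0 k + c0 k := by
      have h1 := size_pair_le c 0
      have h2 : Nat.size (0 : ℕ) = 0 := Nat.size_zero
      have h3 : Nat.size x ^ c0 k + c0 k ≤ Nat.size (Nat.pair x Y) ^ c0 k + c0 k :=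
        bd_mono k _ _ (le_pair_left _ _)
      omega
    obtain ⟨W, hV⟩ := hall (Nat.pair c 0) hZbd
    have φ := hV 0 (by simp)
    simp only [Nat.unpair_pair] at φ
    obtain ⟨hylt, hyne⟩ := φ.2.2.2.2.1 ⟨hc1, hc2⟩
    exact ⟨Nat.size W.unpair.1, hylt, hyne⟩
  -- minimality
  have hmin : ∀ T' < Y.unpair.1, T' ∉ Sset k (Nat.size x) := by
    intro T' hlt hmem
    obtain ⟨hs', hh'⟩ := hmem
    have hZbd : Nat.size (Nat.pair 0 T') ≤ Nat.size (Nat.pair x Y) ^ c0 k + c0 k := by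
      have h1 := size_pair_le 0 T'
      have h2 : Nat.size (0 : ℕ) = 0 := Nat.size_zero
      have h3 : Nat.size x ^ c0 k + c0 k ≤ Nat.size (Nat.pair x Y) ^ c0 k + c0 k :=
        bd_mono k _ _ (le_pair_left _ _)
      omega
    obtain ⟨W, hV⟩ := hall (Nat.pair 0 T') hZbd
    have φa := hV 0 (by simp)
    simp only [Nat.unpair_pair] at φa
    rcases φa.2.2.2.2.2 hlt with hbad | ⟨h1, h2, _⟩
    · omega
    · obtain ⟨y, hy, hne⟩ := hh' W.unpair.2 h1 h2
      have hVbd : Nat.size (2 ^ y - 1)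
          ≤ Nat.size (Nat.pair (Nat.pair (Nat.pair x Y) (Nat.pair 0 T')) W) ^ c0 k + c0 k := by
        rw [size_pow_pred]
        have h3 : Nat.size x ^ c0 k + c0 k
            ≤ Nat.size (Nat.pair (Nat.pair (Nat.pair x Y) (Nat.pair 0 T')) W) ^ c0 k + c0 k :=
          bd_mono k _ _
            (le_trans (le_pair_left _ _) (le_trans (le_pair_left _ _) (le_pair_left _ _)))
        omega
      have φb := hV (2 ^ y - 1) hVbd
      simp only [Nat.unpair_pair] at φb
      rcases φb.2.2.2.2.2 hlt with hbad | ⟨_, _, h3⟩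
      · omega
      · have he := h3 (by rw [size_pow_pred]; exact hy)
        rw [size_pow_pred] at he
        exact hne he
  refine ⟨hg, Y.unpair.1, ⟨hTsz, hHard⟩, hmin, ?_⟩
  simp only [len]
  rw [← huu]
  exact hbit

lemma hardL_SigmaP4 (k : ℕ) (hk : 1 ≤ k) : hardL k ∈ SigmaP 4 := by
  refine ⟨c0 k, L1 k, L1_SigmaP3 k, fun x => ⟨main_fwd k hk x, main_bwd k hk x⟩⟩

end MainIff
/-- If the polynomial hierarchy collapses to `P^NP`, then for every positive integer
`k` there is a language `L ∈ P^NP` with `L ∉ i.o.SIZE[n^k]`, i.e. `L` cannot be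
computed by circuits of size `n^k` even on infinitely many input lengths. -/
theorem PNP_hard_language_of_PH_collapse (hcollapse : PHclass ⊆ PNPclass)
    (k : ℕ) (hk : 1 ≤ k) :
    ∃ L ∈ PNPclass, L ∉ ioSIZE (fun n => n ^ k) := by
  refine ⟨hardL k, ?_, hardL_not_ioSIZE k hk⟩
  exact hcollapse ⟨4, hardL_SigmaP4 k hk⟩

end CLB
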